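/- arXiv:1305.5725 — 6 statements merged into one kernel-verified Lean document; each statement's English description precedes it below -/
import Mathlib

section
/- Let (ε_k) be a sequence of positive reals tending to 0 and for each k let u^{ε_k} be a stationary measure for the self-stabilizing diffusion at noise intensity ε_k. If ∫_ℝ x^{2n} u^{ε_k}(x) dx → +∞ as k → ∞, then Υ_{ε_k}(u^{ε_k}) → +∞ as k → ∞. -/
open MeasureTheory Real Filter Topology

/-- Convolution `(F ∗ u)(x) = ∫ F(x-y) u(y) dy`. -/
noncomputable def interConv (F u : ℝ → ℝ) (x : ℝ) : ℝ := ∫ y : ℝ, F (x - y) * u y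

/-- A probability density on `ℝ`. -/
def IsProbDensity (u : ℝ → ℝ) : Prop :=
  Measurable u ∧ (∀ x, 0 ≤ u x) ∧ (∫ x : ℝ, u x) = 1

/-- All moments of `u` are finite. -/
def HasAllMoments (u : ℝ → ℝ) : Prop :=
  ∀ N : ℕ, Integrable (fun x : ℝ => |x| ^ N * u x)

/-- The free energy `Υ_ε(u)`. -/
noncomputable def freeEnergy (V F : ℝ → ℝ) (ε : ℝ) (u : ℝ → ℝ) : ℝ :=
  ε / 2 * (∫ x : ℝ, u x * Real.log (u x)) + (∫ x : ℝ, V x * u x)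
    + 1 / 2 * (∫ x : ℝ, ∫ y : ℝ, F (x - y) * u x * u y)

/-- A stationary measure of the self-stabilizing diffusion: a probability density with
finite moments of all orders satisfying the Gibbs fixed-point equation. -/
def IsStationarySSD (V F : ℝ → ℝ) (ε : ℝ) (u : ℝ → ℝ) : Prop :=
  IsProbDensity u ∧ HasAllMoments u ∧
    ∀ x : ℝ, u x =
      (∫ y : ℝ, Real.exp (-(2 / ε) * (V y + interConv F u y)))⁻¹ *
        Real.exp (-(2 / ε) * (V x + interConv F u x))

/-- A symmetric density. -/
def IsSymmetric (u : ℝ → ℝ) : Prop := ∀ x, u (-x) = u x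

section AuxProof
open Polynomial

-- pointwise helpers
lemma aux_pow_add_le (a b : ℝ) (ha : 0 ≤ a) (hb : 0 ≤ b) (i : ℕ) :
    (a + b) ^ i ≤ 2 ^ i * (a ^ i + b ^ i) := by
  have h1 : a + b ≤ 2 * max a b := by
    rcases max_cases a b with ⟨h, h'⟩ | ⟨h, h'⟩ <;> rw [h] <;> linarith
  calc (a + b) ^ i ≤ (2 * max a b) ^ i :=
        pow_le_pow_left₀ (by linarith) h1 i
    _ = 2 ^ i * (max a b) ^ i := mul_pow 2 _ i
    _ ≤ 2 ^ i * (a ^ i + b ^ i) := by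
        apply mul_le_mul_of_nonneg_left _ (by positivity)
        rcases max_cases a b with ⟨h, h'⟩ | ⟨h, h'⟩ <;> rw [h] <;> nlinarith [pow_nonneg ha i, pow_nonneg hb i]

lemma aux_abs_le_one_add_pow4 (x : ℝ) : |x| ≤ 1 + x ^ 4 := by
  rcases abs_cases x with ⟨h, _⟩ | ⟨h, _⟩ <;> rw [h] <;> nlinarith [sq_nonneg (x^2 - 1), sq_nonneg (x - 1), sq_nonneg (x + 1), sq_nonneg x, sq_nonneg (x^2 - x), sq_nonneg (x^2+x)]

lemma aux_sq_le (δ x : ℝ) (hδ : 0 < δ) : x ^ 2 ≤ δ * x ^ 4 + 1 / (4 * δ) := by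
  have h : 0 ≤ (2 * δ * x ^ 2 - 1) ^ 2 := sq_nonneg _
  have h4 : 0 < 4 * δ := by linarith
  rw [← sub_nonneg]
  calc (0:ℝ) ≤ (2 * δ * x ^ 2 - 1) ^ 2 / (4 * δ) := div_nonneg h h4.le
    _ = δ * x ^ 4 + 1 / (4 * δ) - x ^ 2 := by field_simp; ring

-- polynomial coefficient bound
lemma aux_poly_abs_bound (r : Polynomial ℝ) (x : ℝ) :
    |r.eval x| ≤ ∑ i ∈ Finset.range (r.natDegree + 1), |r.coeff i| * |x| ^ i := by
  conv_lhs => rw [r.eval_eq_sum_range]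
  refine (Finset.abs_sum_le_sum_abs _ _).trans ?_
  apply Finset.sum_le_sum
  intro i _
  rw [abs_mul, abs_pow]

section density
variable {u : ℝ → ℝ} (hmeas : Measurable u) (h0 : ∀ x, 0 ≤ u x) (hmom : HasAllMoments u)

include hmeas h0 hmom in
lemma aux_int_poly (r : Polynomial ℝ) : Integrable (fun x => r.eval x * u x) := by
  have hb : Integrable (fun x => ∑ i ∈ Finset.range (r.natDegree + 1), |r.coeff i| * (|x| ^ i * u x)) :=
    integrable_finset_sum _ (fun i _ => (hmom i).const_mul _)
  refine hb.mono' ((r.continuous.measurable.mul hmeas).aestronglyMeasurable) ?_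
  filter_upwards with x
  rw [norm_mul, Real.norm_eq_abs, Real.norm_eq_abs, abs_of_nonneg (h0 x)]
  calc |r.eval x| * u x ≤ (∑ i ∈ Finset.range (r.natDegree + 1), |r.coeff i| * |x| ^ i) * u x :=
        mul_le_mul_of_nonneg_right (aux_poly_abs_bound r x) (h0 x)
    _ = ∑ i ∈ Finset.range (r.natDegree + 1), |r.coeff i| * (|x| ^ i * u x) := by
        rw [Finset.sum_mul]; exact Finset.sum_congr rfl (fun i _ => by ring)

include hmeas h0 hmom in
lemma aux_int_pow (i : ℕ) : Integrable (fun x => x ^ i * u x) := by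
  have := aux_int_poly hmeas h0 hmom (Polynomial.X ^ i)
  simpa using this

include hmeas h0 hmom in
lemma aux_int_shift (c : ℝ) (i : ℕ) : Integrable (fun x => (x - c) ^ i * u x) := by
  have := aux_int_poly hmeas h0 hmom ((Polynomial.X - Polynomial.C c) ^ i)
  simpa using this

include hmeas h0 hmom in
lemma aux_int_u : Integrable u := by
  have := hmom 0; simpa using this

end density

-- entropy pointwise
lemma aux_entropy_pt (t x : ℝ) (ht : 0 ≤ t) :
    -(x ^ 2) * t + t - Real.exp (-(x ^ 2)) ≤ t * Real.log t := by
  set s := Real.exp (-(x ^ 2)) with hs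
  have hs0 : 0 < s := Real.exp_pos _
  have hls : Real.log s = -(x ^ 2) := Real.log_exp _
  rcases eq_or_lt_of_le ht with h | h
  · rw [← h]; simp; positivity
  · have hlog : Real.log (s / t) ≤ s / t - 1 := Real.log_le_sub_one_of_pos (div_pos hs0 h)
    rw [Real.log_div hs0.ne' h.ne'] at hlog
    have h2 : t * (Real.log s - Real.log t) ≤ t * (s / t - 1) :=
      mul_le_mul_of_nonneg_left hlog ht
    have h3 : t * (s / t - 1) = s - t := by field_simp
    nlinarith [h2, hls, h3]

lemma aux_entropy_lb {u : ℝ → ℝ} (hmeas : Measurable u) (h0 : ∀ x, 0 ≤ u x)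
    (hmom : HasAllMoments u) (h1 : (∫ x : ℝ, u x) = 1) :
    1 - Real.sqrt π - (∫ x : ℝ, x ^ 2 * u x) ≤ ∫ x : ℝ, u x * Real.log (u x) := by
  have hm2 : Integrable (fun x : ℝ => x ^ 2 * u x) := aux_int_pow hmeas h0 hmom 2
  have hiu : Integrable u := aux_int_u hmeas h0 hmom
  have hneg : Integrable (fun x : ℝ => -(x ^ 2) * u x) :=
    hm2.neg.congr (by filter_upwards with x; simp only [Pi.neg_apply]; ring)
  have hgauss : Integrable (fun x : ℝ => Real.exp (-(x ^ 2))) := by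
    simpa using integrable_exp_neg_mul_sq (by norm_num : (0:ℝ) < 1)
  have hgaussval : (∫ x : ℝ, Real.exp (-(x ^ 2))) = Real.sqrt π := by
    have := integral_gaussian 1
    simpa using this
  have hnegval : (∫ x : ℝ, -(x ^ 2) * u x) = -(∫ x : ℝ, x ^ 2 * u x) := by
    rw [← integral_neg]
    exact integral_congr_ae (by filter_upwards with x; ring)
  have hg2 : Integrable (fun x : ℝ => -(x ^ 2) * u x + u x) := hneg.add hiu
  have hg : Integrable (fun x : ℝ => -(x ^ 2) * u x + u x - Real.exp (-(x ^ 2))) :=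
    hg2.sub hgauss
  have hgval : (∫ x : ℝ, (-(x ^ 2) * u x + u x - Real.exp (-(x ^ 2))))
      = -(∫ x : ℝ, x ^ 2 * u x) + 1 - Real.sqrt π := by
    rw [integral_sub hg2 hgauss, integral_add hneg hiu, hgaussval, h1, hnegval]
  have hm2nn : 0 ≤ ∫ x : ℝ, x ^ 2 * u x :=
    integral_nonneg (fun x => mul_nonneg (sq_nonneg x) (h0 x))
  have hpi : (1:ℝ) ≤ Real.sqrt π := by
    rw [show (1:ℝ) = Real.sqrt 1 by simp]
    exact Real.sqrt_le_sqrt (by linarith [Real.pi_gt_three])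
  by_cases hI : Integrable (fun x => u x * Real.log (u x))
  · have := integral_mono hg hI (fun x => aux_entropy_pt (u x) x (h0 x))
    rw [hgval] at this
    linarith
  · rw [integral_undef hI]
    linarith

-- even convex with F 0 = 0 is nonneg
lemma aux_even_convex_nonneg {F : ℝ → ℝ} (hconv : ConvexOn ℝ Set.univ F)
    (heven : ∀ x, F (-x) = F x) (h0 : F 0 = 0) : ∀ x, 0 ≤ F x := by
  intro x
  have h := hconv.2 (Set.mem_univ x) (Set.mem_univ (-x))
    (by norm_num : (0:ℝ) ≤ 1/2) (by norm_num : (0:ℝ) ≤ 1/2) (by norm_num)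
  simp only [smul_eq_mul] at h
  have hx : (1/2 : ℝ) * x + (1/2 : ℝ) * (-x) = 0 := by ring
  rw [hx, h0, heven x] at h
  linarith

-- tangent line inequality for differentiable convex functions
lemma aux_tangent {F : ℝ → ℝ} (hconv : ConvexOn ℝ Set.univ F)
    (hdiff : Differentiable ℝ F) (a b : ℝ) :
    F a + deriv F a * (b - a) ≤ F b := by
  rcases lt_trichotomy a b with h | h | h
  · have := hconv.deriv_le_slope (Set.mem_univ a) (Set.mem_univ b) h (hdiff a)
    rw [slope_def_field] at this
    have hba : 0 < b - a := by linarith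
    have := (le_div_iff₀ hba).mp this
    linarith
  · subst h; simp
  · have := hconv.slope_le_deriv (Set.mem_univ b) (Set.mem_univ a) h (hdiff a)
    rw [slope_def_field] at this
    have hab : 0 < a - b := by linarith
    have := (div_le_iff₀ hab).mp this
    nlinarith

-- polynomial lower bound: even nonneg polynomial of degree 2n dominates c*z^(2n) - C
lemma aux_poly_lower (n : ℕ) (hn : 1 ≤ n) (q : Polynomial ℝ) (hdeg : q.natDegree = 2 * n)
    (hnonneg : ∀ x, 0 ≤ q.eval x) (heven : ∀ x, q.eval (-x) = q.eval x) :
    ∃ c' C' : ℝ, 0 < c' ∧ 0 ≤ C' ∧ ∀ z : ℝ, c' * z ^ (2 * n) - C' ≤ q.eval z := by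
  have hq0 : q ≠ 0 := by
    intro h
    rw [h, Polynomial.natDegree_zero] at hdeg
    omega
  have hndegpos : 0 < q.natDegree := by omega
  have hdegpos : 0 < q.degree := Polynomial.natDegree_pos_iff_degree_pos.mp hndegpos
  have hL : 0 < q.leadingCoeff := by
    rcases lt_trichotomy q.leadingCoeff 0 with h | h | h
    · exfalso
      have htb := Polynomial.tendsto_atBot_of_leadingCoeff_nonpos q hdegpos h.le
      obtain ⟨x, hx⟩ := (htb.eventually (eventually_le_atBot (-1))).exists
      have := hnonneg x
      linarith
    · exact absurd h (Polynomial.leadingCoeff_ne_zero.mpr hq0)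
    · exact h
  set L := q.leadingCoeff with hLdef
  set r := q - Polynomial.C (L / 2) * Polynomial.X ^ (2 * n) with hr
  have hrc : r.coeff (2 * n) = L / 2 := by
    rw [hr]
    simp only [Polynomial.coeff_sub, Polynomial.coeff_C_mul, Polynomial.coeff_X_pow,
      eq_self_iff_true, if_true, mul_one]
    have h5 : q.coeff (2 * n) = L := by rw [hLdef, Polynomial.leadingCoeff, hdeg]
    rw [h5]; linarith
  have hrc0 : r.coeff (2 * n) ≠ 0 := by rw [hrc]; positivity
  have hrdeg : r.natDegree = 2 * n := by
    apply le_antisymm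
    · refine (Polynomial.natDegree_sub_le _ _).trans ?_
      simp only [hdeg, max_le_iff, le_refl, true_and]
      exact (Polynomial.natDegree_C_mul_le _ _).trans (by simp)
    · exact Polynomial.le_natDegree_of_ne_zero hrc0
  have hrl : 0 ≤ r.leadingCoeff := by
    rw [Polynomial.leadingCoeff, hrdeg, hrc]; positivity
  have hrdegpos : 0 < r.degree :=
    Polynomial.natDegree_pos_iff_degree_pos.mp (by omega)
  have htt := Polynomial.tendsto_atTop_of_leadingCoeff_nonneg r hrdegpos hrl
  obtain ⟨M, hM⟩ := (htt.eventually (eventually_ge_atTop 0)).exists_forall_of_atTop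
  set M₀ := max M 0 with hM₀
  have hMle : -M₀ ≤ M₀ := by
    have : (0:ℝ) ≤ M₀ := le_max_right _ _
    linarith
  obtain ⟨z₀, hz₀mem, hz₀⟩ := isCompact_Icc.exists_isMinOn (Set.nonempty_Icc.mpr hMle)
    (r.continuous.continuousOn (s := Set.Icc (-M₀) M₀))
  set C' := max 0 (-(r.eval z₀)) with hC'
  have hC0 : 0 ≤ C' := le_max_left _ _
  have hreven : ∀ z, r.eval (-z) = r.eval z := by
    intro z
    rw [hr]
    simp only [Polynomial.eval_sub, Polynomial.eval_mul, Polynomial.eval_C, Polynomial.eval_pow,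
      Polynomial.eval_X, heven]
    rw [Even.neg_pow (even_two_mul n)]
  have hrlb : ∀ z, -C' ≤ r.eval z := by
    intro z
    rcases le_or_gt z M₀ with h1 | h1
    · rcases le_or_gt (-M₀) z with h2 | h2
      · have := hz₀ (Set.mem_Icc.mpr ⟨h2, h1⟩)
        have h3 : -C' ≤ r.eval z₀ := by
          have : -(r.eval z₀) ≤ C' := le_max_right _ _
          linarith
        exact h3.trans this
      · have h3 : M ≤ -z := by
          have : M ≤ M₀ := le_max_left _ _
          linarith
        have := hM (-z) h3
        rw [hreven] at this
        linarith
    · have h3 : M ≤ z := le_trans (le_max_left _ _) h1.le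
      have := hM z h3
      linarith
  refine ⟨L / 2, C', by positivity, hC0, fun z => ?_⟩
  have hqz : q.eval z = r.eval z + L / 2 * z ^ (2 * n) := by
    rw [hr]
    simp only [Polynomial.eval_sub, Polynomial.eval_mul, Polynomial.eval_C, Polynomial.eval_pow,
      Polynomial.eval_X]
    ring
  rw [hqz]
  have := hrlb z
  linarith

set_option maxHeartbeats 1000000 in
lemma aux_main_bound (n : ℕ) (hn : 1 ≤ n)
    (F : ℝ → ℝ) (q : Polynomial ℝ) (hFq : ∀ x, F x = q.eval x)
    (hFconv : ConvexOn ℝ Set.univ F)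
    (c' C' : ℝ) (hc' : 0 < c') (hC' : 0 ≤ C')
    (hFlow : ∀ z, c' * z ^ (2 * n) - C' ≤ F z)
    (V : ℝ → ℝ) (p : Polynomial ℝ) (hVp : ∀ x, V x = p.eval x)
    (C₂ C₄ : ℝ) (hC₂ : 0 < C₂) (hC₄ : 0 < C₄)
    (hVgrowth : ∀ x, C₄ * x ^ 4 - C₂ * x ^ 2 ≤ V x)
    (ε : ℝ) (hε : 0 < ε) (hε1 : ε ≤ 1)
    (u : ℝ → ℝ) (hu : IsProbDensity u) (hmom : HasAllMoments u) :
    ∃ S : ℝ, 0 ≤ S ∧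
      (∫ x : ℝ, x ^ (2 * n) * u x) ≤ (2 * (1 + S)) ^ (2 * n + 1) ∧
      min (C₄ / 2) (c' / 2) * S
          - (Real.sqrt π / 2 + C' / 2 + (C₂ + 1) * ((C₂ + 1) / (2 * C₄)))
        ≤ freeEnergy V F ε u := by
  obtain ⟨hmeas, h0, h1⟩ := hu
  have hiu : Integrable u := aux_int_u hmeas h0 hmom
  have i1 : Integrable (fun x : ℝ => x * u x) := by
    have := aux_int_pow hmeas h0 hmom 1
    simpa using this
  have i2 : Integrable (fun x : ℝ => x ^ 2 * u x) := aux_int_pow hmeas h0 hmom 2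
  have i4 : Integrable (fun x : ℝ => x ^ 4 * u x) := aux_int_pow hmeas h0 hmom 4
  have i2n : Integrable (fun x : ℝ => x ^ (2 * n) * u x) := aux_int_pow hmeas h0 hmom (2 * n)
  set μ : ℝ := ∫ x : ℝ, x * u x with hμdef
  have iB : Integrable (fun x : ℝ => (x - μ) ^ (2 * n) * u x) := aux_int_shift hmeas h0 hmom μ (2 * n)
  set A : ℝ := ∫ x : ℝ, x ^ 4 * u x with hAdef
  set B : ℝ := ∫ x : ℝ, (x - μ) ^ (2 * n) * u x with hBdef
  set m₂ : ℝ := ∫ x : ℝ, x ^ 2 * u x with hm₂def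
  have hA0 : 0 ≤ A := integral_nonneg fun x => mul_nonneg (by positivity) (h0 x)
  have hB0 : 0 ≤ B := integral_nonneg fun x =>
    mul_nonneg ((even_two_mul n).pow_nonneg _) (h0 x)
  have hm₂0 : 0 ≤ m₂ := integral_nonneg fun x => mul_nonneg (sq_nonneg x) (h0 x)
  have hFdiff : Differentiable ℝ F := by
    have e : F = fun x => q.eval x := funext hFq
    rw [e]; exact q.differentiable
  -- the convolution G
  set G : ℝ → ℝ := fun x => ∫ y : ℝ, F (x - y) * u y with hGdef
  have hGmeas : Measurable G := by
    have hjm : Measurable (fun z : ℝ × ℝ => q.eval (z.1 - z.2) * u z.2) :=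
      (q.continuous.measurable.comp (measurable_fst.sub measurable_snd)).mul
        (hmeas.comp measurable_snd)
    have hsm : StronglyMeasurable (fun x : ℝ => ∫ y : ℝ, q.eval (x - y) * u y) :=
      hjm.stronglyMeasurable.integral_prod_right' (ν := volume)
    have e : G = fun x => ∫ y : ℝ, q.eval (x - y) * u y := by
      funext x
      exact integral_congr_ae (by filter_upwards with y; rw [hFq])
    rw [e]
    exact hsm.measurable
  have hIshift : ∀ x : ℝ, Integrable (fun y : ℝ => F (x - y) * u y) := by
    intro x
    have := aux_int_poly hmeas h0 hmom (q.comp (Polynomial.C x - Polynomial.X))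
    refine this.congr ?_
    filter_upwards with y
    rw [Polynomial.eval_comp]
    simp [hFq]
  have hIshiftAbs : ∀ x : ℝ, Integrable (fun y : ℝ => |F (x - y)| * u y) := by
    intro x
    refine (hIshift x).abs.congr ?_
    filter_upwards with y
    rw [abs_mul, abs_of_nonneg (h0 y)]
  -- coefficient bound data
  set d : ℕ := q.natDegree with hd
  set a : ℕ → ℝ := fun i => |q.coeff i| * 2 ^ i with hadef
  set Mi : ℕ → ℝ := fun i => ∫ y : ℝ, |y| ^ i * u y with hMidef
  have hFbound : ∀ x y : ℝ, |F (x - y)| ≤ ∑ i ∈ Finset.range (d + 1), a i * (|x| ^ i + |y| ^ i) := by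
    intro x y
    rw [hFq]
    refine (aux_poly_abs_bound q (x - y)).trans ?_
    apply Finset.sum_le_sum
    intro i _
    have h2 : |x - y| ^ i ≤ (|x| + |y|) ^ i :=
      pow_le_pow_left₀ (abs_nonneg _) (abs_sub _ _) i
    have h3 : (|x| + |y|) ^ i ≤ 2 ^ i * (|x| ^ i + |y| ^ i) :=
      aux_pow_add_le _ _ (abs_nonneg x) (abs_nonneg y) i
    calc |q.coeff i| * |x - y| ^ i ≤ |q.coeff i| * (2 ^ i * (|x| ^ i + |y| ^ i)) :=
          mul_le_mul_of_nonneg_left (h2.trans h3) (abs_nonneg _)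
      _ = a i * (|x| ^ i + |y| ^ i) := by rw [hadef]; ring
  have hGbound : ∀ x : ℝ, |G x| ≤ ∑ i ∈ Finset.range (d + 1), a i * (|x| ^ i + Mi i) := by
    intro x
    have h2 : |G x| ≤ ∫ y : ℝ, |F (x - y)| * u y := by
      rw [hGdef, ← Real.norm_eq_abs]
      refine (norm_integral_le_integral_norm _).trans_eq ?_
      exact integral_congr_ae (by filter_upwards with y; rw [norm_mul, Real.norm_eq_abs,
        Real.norm_eq_abs, abs_of_nonneg (h0 y)])
    refine h2.trans ?_
    have hint2 : Integrable (fun y : ℝ =>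
        ∑ i ∈ Finset.range (d + 1), (a i * |x| ^ i * u y + a i * (|y| ^ i * u y))) :=
      integrable_finset_sum _ fun i _ => (hiu.const_mul _).add ((hmom i).const_mul _)
    have hle := integral_mono (hIshiftAbs x) hint2 (fun y => by
      have := hFbound x y
      calc |F (x - y)| * u y
          ≤ (∑ i ∈ Finset.range (d + 1), a i * (|x| ^ i + |y| ^ i)) * u y :=
            mul_le_mul_of_nonneg_right this (h0 y)
        _ = ∑ i ∈ Finset.range (d + 1), (a i * |x| ^ i * u y + a i * (|y| ^ i * u y)) := by
            rw [Finset.sum_mul]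
            exact Finset.sum_congr rfl fun i _ => by ring)
    refine hle.trans_eq ?_
    rw [integral_finset_sum _ (fun i _ => show Integrable
      (fun y : ℝ => a i * |x| ^ i * u y + a i * (|y| ^ i * u y)) volume from
      (hiu.const_mul _).add ((hmom i).const_mul _))]
    apply Finset.sum_congr rfl
    intro i _
    rw [integral_add (hiu.const_mul _) ((hmom i).const_mul _), integral_const_mul,
      integral_const_mul, h1, hMidef]
    ring
  have hIint : Integrable (fun x : ℝ => u x * G x) := by
    have hbint : Integrable (fun x : ℝ =>
        ∑ i ∈ Finset.range (d + 1), (a i * (|x| ^ i * u x) + a i * Mi i * u x)) :=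
      integrable_finset_sum _ fun i _ => ((hmom i).const_mul _).add (hiu.const_mul _)
    refine hbint.mono' ((hmeas.mul hGmeas).aestronglyMeasurable) ?_
    filter_upwards with x
    rw [norm_mul, Real.norm_eq_abs, Real.norm_eq_abs, abs_of_nonneg (h0 x)]
    calc u x * |G x| ≤ u x * ∑ i ∈ Finset.range (d + 1), a i * (|x| ^ i + Mi i) :=
          mul_le_mul_of_nonneg_left (hGbound x) (h0 x)
      _ = ∑ i ∈ Finset.range (d + 1), (a i * (|x| ^ i * u x) + a i * Mi i * u x) := by
          rw [Finset.mul_sum]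
          exact Finset.sum_congr rfl fun i _ => by ring
  -- Jensen step
  have hJensen : ∀ x : ℝ, F (x - μ) ≤ G x := by
    intro x
    set c : ℝ := deriv F (x - μ) with hc
    have hpt : ∀ y : ℝ, (F (x - μ) + c * μ) * u y + (-c) * (y * u y) ≤ F (x - y) * u y := by
      intro y
      have ht := aux_tangent hFconv hFdiff (x - μ) (x - y)
      have h2 : F (x - μ) + c * (μ - y) ≤ F (x - y) := by
        have e : μ - y = (x - y) - (x - μ) := by ring
        rw [e]
        exact ht
      have h3 := mul_le_mul_of_nonneg_right h2 (h0 y)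
      calc (F (x - μ) + c * μ) * u y + (-c) * (y * u y)
          = (F (x - μ) + c * (μ - y)) * u y := by ring
        _ ≤ F (x - y) * u y := h3
    have hLint : Integrable (fun y : ℝ => (F (x - μ) + c * μ) * u y + (-c) * (y * u y)) :=
      (hiu.const_mul _).add (i1.const_mul _)
    have hle := integral_mono hLint (hIshift x) hpt
    have hval : (∫ y : ℝ, ((F (x - μ) + c * μ) * u y + (-c) * (y * u y))) = F (x - μ) := by
      rw [integral_add (hiu.const_mul _) (i1.const_mul _), integral_const_mul,
        integral_const_mul, h1, ← hμdef]
      ring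
    rw [hval] at hle
    exact hle
  have hGlow : ∀ x : ℝ, c' * (x - μ) ^ (2 * n) - C' ≤ G x :=
    fun x => le_trans (by simpa using hFlow (x - μ)) (hJensen x)
  -- interaction term lower bound
  have hT3eq : (∫ x : ℝ, ∫ y : ℝ, F (x - y) * u x * u y) = ∫ x : ℝ, u x * G x := by
    apply integral_congr_ae
    filter_upwards with x
    rw [hGdef, ← integral_const_mul]
    exact integral_congr_ae (by filter_upwards with y; ring)
  have hlowint : Integrable (fun x : ℝ => c' * ((x - μ) ^ (2 * n) * u x) - C' * u x) :=
    (iB.const_mul _).sub (hiu.const_mul _)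
  have hT3 : c' * B - C' ≤ ∫ x : ℝ, u x * G x := by
    have hle := integral_mono hlowint hIint (fun x => by
      have h2 := mul_le_mul_of_nonneg_left (hGlow x) (h0 x)
      calc c' * ((x - μ) ^ (2 * n) * u x) - C' * u x
          = u x * (c' * (x - μ) ^ (2 * n) - C') := by ring
        _ ≤ u x * G x := h2)
    have hval : (∫ x : ℝ, (c' * ((x - μ) ^ (2 * n) * u x) - C' * u x))
        = c' * B - C' := by
      rw [integral_sub (iB.const_mul _) (hiu.const_mul _), integral_const_mul,
        integral_const_mul, h1, ← hBdef]
      ring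
    rw [hval] at hle
    exact hle
  -- confinement term lower bound
  have iV : Integrable (fun x : ℝ => V x * u x) := by
    refine (aux_int_poly hmeas h0 hmom p).congr ?_
    filter_upwards with x
    rw [hVp]
  have hT2 : C₄ * A - C₂ * m₂ ≤ ∫ x : ℝ, V x * u x := by
    have hlowint2 : Integrable (fun x : ℝ => C₄ * (x ^ 4 * u x) - C₂ * (x ^ 2 * u x)) :=
      (i4.const_mul _).sub (i2.const_mul _)
    have hle := integral_mono hlowint2 iV (fun x => by
      have h2 := mul_le_mul_of_nonneg_right (hVgrowth x) (h0 x)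
      calc C₄ * (x ^ 4 * u x) - C₂ * (x ^ 2 * u x)
          = (C₄ * x ^ 4 - C₂ * x ^ 2) * u x := by ring
        _ ≤ V x * u x := h2)
    have hval : (∫ x : ℝ, (C₄ * (x ^ 4 * u x) - C₂ * (x ^ 2 * u x))) = C₄ * A - C₂ * m₂ := by
      rw [integral_sub (i4.const_mul _) (i2.const_mul _), integral_const_mul,
        integral_const_mul, ← hAdef, ← hm₂def]
    rw [hval] at hle
    exact hle
  -- entropy term lower bound
  have hpi : (1:ℝ) ≤ Real.sqrt π := by
    rw [show (1:ℝ) = Real.sqrt 1 by simp]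
    exact Real.sqrt_le_sqrt (by linarith [Real.pi_gt_three])
  have hE := aux_entropy_lb hmeas h0 hmom h1
  rw [← hm₂def] at hE
  set E : ℝ := ∫ x : ℝ, u x * Real.log (u x) with hEdef
  have hT1 : (1 - Real.sqrt π - m₂) / 2 ≤ ε / 2 * E := by
    rcases le_or_gt E 0 with h | h
    · nlinarith [mul_nonneg (by linarith : (0:ℝ) ≤ 1 - ε) (by linarith : (0:ℝ) ≤ -E)]
    · nlinarith [mul_nonneg (by linarith : (0:ℝ) ≤ ε) h.le]
  -- second moment vs fourth moment
  set δ : ℝ := C₄ / (2 * (C₂ + 1)) with hδdef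
  have hδ : 0 < δ := by rw [hδdef]; positivity
  have hm₂le : m₂ ≤ δ * A + 1 / (4 * δ) := by
    have hbint : Integrable (fun x : ℝ => δ * (x ^ 4 * u x) + (1 / (4 * δ)) * u x) :=
      (i4.const_mul _).add (hiu.const_mul _)
    have hle := integral_mono i2 hbint (fun x => by
      have h2 := mul_le_mul_of_nonneg_right (aux_sq_le δ x hδ) (h0 x)
      calc x ^ 2 * u x ≤ (δ * x ^ 4 + 1 / (4 * δ)) * u x := h2
        _ = δ * (x ^ 4 * u x) + (1 / (4 * δ)) * u x := by ring)
    have hval : (∫ x : ℝ, (δ * (x ^ 4 * u x) + (1 / (4 * δ)) * u x)) = δ * A + 1 / (4 * δ) := by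
      rw [integral_add (i4.const_mul _) (hiu.const_mul _), integral_const_mul,
        integral_const_mul, h1, ← hAdef]
      ring
    rw [hval] at hle
    exact hle
  -- 2n-th moment upper bound
  have hμA : |μ| ≤ 1 + A := by
    have h2 : |μ| ≤ ∫ x : ℝ, |x| * u x := by
      rw [hμdef, ← Real.norm_eq_abs]
      refine (norm_integral_le_integral_norm _).trans_eq ?_
      exact integral_congr_ae (by filter_upwards with x; rw [norm_mul, Real.norm_eq_abs,
        Real.norm_eq_abs, abs_of_nonneg (h0 x)])
    refine h2.trans ?_
    have hiabs : Integrable (fun x : ℝ => |x| * u x) := by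
      have := hmom 1; simpa using this
    have hbint : Integrable (fun x : ℝ => u x + x ^ 4 * u x) := hiu.add i4
    have hle := integral_mono hiabs hbint (fun x => by
      have h3 := mul_le_mul_of_nonneg_right (aux_abs_le_one_add_pow4 x) (h0 x)
      calc |x| * u x ≤ (1 + x ^ 4) * u x := h3
        _ = u x + x ^ 4 * u x := by ring)
    rw [integral_add hiu i4, h1, ← hAdef] at hle
    exact hle
  set S : ℝ := A + B with hSdef
  have hS0 : 0 ≤ S := by positivity
  refine ⟨S, hS0, ?_, ?_⟩
  · -- moment bound
    have hptx : ∀ x : ℝ, x ^ (2 * n) * u x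
        ≤ 2 ^ (2 * n) * ((x - μ) ^ (2 * n) * u x) + (2 ^ (2 * n) * (1 + A) ^ (2 * n)) * u x := by
      intro x
      have habs : |x| ≤ |x - μ| + |μ| := by
        calc |x| = |(x - μ) + μ| := by ring_nf
          _ ≤ |x - μ| + |μ| := abs_add_le _ _
      have h2 : |x| ^ (2 * n) ≤ (|x - μ| + |μ|) ^ (2 * n) :=
        pow_le_pow_left₀ (abs_nonneg x) habs _
      have h3 : (|x - μ| + |μ|) ^ (2 * n) ≤ 2 ^ (2 * n) * (|x - μ| ^ (2 * n) + |μ| ^ (2 * n)) :=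
        aux_pow_add_le _ _ (abs_nonneg _) (abs_nonneg _) _
      have h4 : |μ| ^ (2 * n) ≤ (1 + A) ^ (2 * n) := pow_le_pow_left₀ (abs_nonneg μ) hμA _
      have h5 : x ^ (2 * n) ≤ 2 ^ (2 * n) * ((x - μ) ^ (2 * n) + (1 + A) ^ (2 * n)) := by
        rw [← (even_two_mul n).pow_abs x, ← (even_two_mul n).pow_abs (x - μ)]
        have h4' : 2 ^ (2 * n) * (|x - μ| ^ (2 * n) + |μ| ^ (2 * n))
            ≤ 2 ^ (2 * n) * (|x - μ| ^ (2 * n) + (1 + A) ^ (2 * n)) := by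
          apply mul_le_mul_of_nonneg_left (by linarith) (by positivity)
        linarith [h2, h3, h4']
      have h6 := mul_le_mul_of_nonneg_right h5 (h0 x)
      calc x ^ (2 * n) * u x ≤ (2 ^ (2 * n) * ((x - μ) ^ (2 * n) + (1 + A) ^ (2 * n))) * u x := h6
        _ = 2 ^ (2 * n) * ((x - μ) ^ (2 * n) * u x) + (2 ^ (2 * n) * (1 + A) ^ (2 * n)) * u x := by
            ring
    have hbint : Integrable (fun x : ℝ => 2 ^ (2 * n) * ((x - μ) ^ (2 * n) * u x)
        + (2 ^ (2 * n) * (1 + A) ^ (2 * n)) * u x) := (iB.const_mul _).add (hiu.const_mul _)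
    have hle := integral_mono i2n hbint hptx
    rw [integral_add (iB.const_mul _) (hiu.const_mul _), integral_const_mul,
      integral_const_mul, h1, ← hBdef] at hle
    refine hle.trans ?_
    have h1S : (1:ℝ) ≤ 1 + S := by linarith
    have hB1 : B ≤ (1 + S) ^ (2 * n) := by
      have : B ≤ 1 + S := by rw [hSdef]; linarith
      exact this.trans (le_self_pow₀ h1S (by omega))
    have hA1 : (1 + A) ^ (2 * n) ≤ (1 + S) ^ (2 * n) :=
      pow_le_pow_left₀ (by linarith) (by rw [hSdef]; linarith) _
    have h2p : (0:ℝ) < 2 ^ (2 * n) := by positivity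
    calc 2 ^ (2 * n) * B + 2 ^ (2 * n) * (1 + A) ^ (2 * n) * 1
        ≤ 2 ^ (2 * n) * (1 + S) ^ (2 * n) + 2 ^ (2 * n) * (1 + S) ^ (2 * n) := by
          nlinarith [hB1, hA1, h2p]
      _ = 2 ^ (2 * n + 1) * (1 + S) ^ (2 * n) := by rw [pow_succ]; ring
      _ ≤ 2 ^ (2 * n + 1) * (1 + S) ^ (2 * n + 1) := by
          refine mul_le_mul_of_nonneg_left ?_ (by positivity)
          exact pow_le_pow_right₀ h1S (by omega)
      _ = (2 * (1 + S)) ^ (2 * n + 1) := by rw [mul_pow]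
  · -- free energy lower bound
    have hT3' : 1 / 2 * (c' * B - C')
        ≤ 1 / 2 * (∫ x : ℝ, ∫ y : ℝ, F (x - y) * u x * u y) := by
      rw [hT3eq]
      linarith [hT3]
    have hmin1 : min (C₄ / 2) (c' / 2) ≤ C₄ / 2 := min_le_left _ _
    have hmin2 : min (C₄ / 2) (c' / 2) ≤ c' / 2 := min_le_right _ _
    have h10 : min (C₄ / 2) (c' / 2) * A ≤ C₄ / 2 * A := mul_le_mul_of_nonneg_right hmin1 hA0
    have h11 : min (C₄ / 2) (c' / 2) * B ≤ c' / 2 * B := mul_le_mul_of_nonneg_right hmin2 hB0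
    have h8 : (C₂ + 1) * δ = C₄ / 2 := by
      rw [hδdef]; field_simp
    have h9 : 1 / (4 * δ) = (C₂ + 1) / (2 * C₄) := by
      rw [hδdef]; field_simp; ring
    have h7 : (C₂ + 1) * m₂ ≤ C₄ / 2 * A + (C₂ + 1) * ((C₂ + 1) / (2 * C₄)) := by
      have h12 := mul_le_mul_of_nonneg_left hm₂le (by linarith : (0:ℝ) ≤ C₂ + 1)
      calc (C₂ + 1) * m₂ ≤ (C₂ + 1) * (δ * A + 1 / (4 * δ)) := h12
        _ = ((C₂ + 1) * δ) * A + (C₂ + 1) * (1 / (4 * δ)) := by ring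
        _ = C₄ / 2 * A + (C₂ + 1) * ((C₂ + 1) / (2 * C₄)) := by rw [h8, h9]
    have hFEdef : freeEnergy V F ε u = ε / 2 * E + (∫ x : ℝ, V x * u x)
        + 1 / 2 * (∫ x : ℝ, ∫ y : ℝ, F (x - y) * u x * u y) := rfl
    rw [hFEdef, hSdef]
    linarith [hT1, hT2, hT3', hm₂0, hpi, h7, h10, h11]


end AuxProof

theorem stmt3
    (m n : ℕ) (hm : 2 ≤ m) (hn : 1 ≤ n)
    (V F : ℝ → ℝ) (p q : Polynomial ℝ)
    (hVp : ∀ x, V x = p.eval x) (hVdeg : p.natDegree = 2 * m)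
    (hVeven : ∀ x, V (-x) = V x) (hV0 : V 0 = 0)
    (a : ℝ) (ha : 0 < a)
    (hVcrit : ∀ x, deriv V x = 0 ↔ x = -a ∨ x = 0 ∨ x = a)
    (hVa : 0 < deriv (deriv V) a) (hV0'' : deriv (deriv V) 0 < 0)
    (C₂ C₄ : ℝ) (hC₂ : 0 < C₂) (hC₄ : 0 < C₄)
    (hVgrowth : ∀ x, C₄ * x ^ 4 - C₂ * x ^ 2 ≤ V x)
    (hVinfTop : Tendsto (deriv (deriv V)) atTop atTop)
    (hVinfBot : Tendsto (deriv (deriv V)) atBot atTop)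
    (hVpos : ∀ x, a ≤ x → 0 < deriv (deriv V) x)
    (hVconv : ConvexOn ℝ Set.univ (deriv (deriv V)))
    (hFq : ∀ x, F x = q.eval x) (hFdeg : q.natDegree = 2 * n)
    (hFeven : ∀ x, F (-x) = F x) (hF0 : F 0 = 0)
    (hFconv : ConvexOn ℝ Set.univ F)
    (hF''conv : ConvexOn ℝ Set.univ (deriv (deriv F)))
    (ε : ℕ → ℝ) (hεpos : ∀ k, 0 < ε k) (hε0 : Tendsto ε atTop (𝓝 0))
    (u : ℕ → ℝ → ℝ) (hstat : ∀ k, IsStationarySSD V F (ε k) (u k))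
    (hmom : Tendsto (fun k => ∫ x : ℝ, x ^ (2 * n) * u k x) atTop atTop) :
    Tendsto (fun k => freeEnergy V F (ε k) (u k)) atTop atTop := by
  have hq_nonneg : ∀ x, 0 ≤ q.eval x := by
    intro x; rw [← hFq]; exact aux_even_convex_nonneg hFconv hFeven hF0 x
  have hq_even : ∀ x, q.eval (-x) = q.eval x := by
    intro x; rw [← hFq, ← hFq, hFeven]
  obtain ⟨c', C', hc', hC', hFlow⟩ := aux_poly_lower n hn q hFdeg hq_nonneg hq_even
  have hFlow' : ∀ z, c' * z ^ (2 * n) - C' ≤ F z := fun z => by rw [hFq]; exact hFlow z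
  set c₀ := min (C₄ / 2) (c' / 2) with hc₀def
  have hc₀ : 0 < c₀ := lt_min (by linarith) (by linarith)
  set K := Real.sqrt π / 2 + C' / 2 + (C₂ + 1) * ((C₂ + 1) / (2 * C₄)) with hKdef
  have hmain : ∀ k, ∃ S : ℝ, 0 ≤ S ∧ (ε k ≤ 1 →
      ((∫ x : ℝ, x ^ (2 * n) * u k x) ≤ (2 * (1 + S)) ^ (2 * n + 1) ∧
        c₀ * S - K ≤ freeEnergy V F (ε k) (u k))) := by
    intro k
    by_cases hk : ε k ≤ 1
    · obtain ⟨S, h1, h2, h3⟩ := aux_main_bound n hn F q hFq hFconv c' C' hc' hC' hFlow'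
        V p hVp C₂ C₄ hC₂ hC₄ hVgrowth (ε k) (hεpos k) hk (u k) (hstat k).1 (hstat k).2.1
      exact ⟨S, h1, fun _ => ⟨h2, h3⟩⟩
    · exact ⟨0, le_refl _, fun h => absurd h hk⟩
  choose S hS0 hSbound using hmain
  have hev : ∀ᶠ k in atTop, ε k ≤ 1 :=
    hε0.eventually (eventually_le_nhds (by norm_num : (0:ℝ) < 1))
  have hStend : Tendsto S atTop atTop := by
    rw [tendsto_atTop]
    intro R
    filter_upwards [hmom.eventually_ge_atTop ((2 * (1 + max R 0)) ^ (2 * n + 1)), hev]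
      with k h1 h2
    obtain ⟨hmomle, _⟩ := hSbound k h2
    have hbase : (0:ℝ) ≤ 2 * (1 + S k) := by linarith [hS0 k]
    have hle2 : (2 * (1 + max R 0)) ^ (2 * n + 1) ≤ (2 * (1 + S k)) ^ (2 * n + 1) :=
      le_trans h1 hmomle
    have h3 := le_of_pow_le_pow_left₀ (by omega) hbase hle2
    have h4 : max R 0 ≤ S k := by linarith
    exact le_trans (le_max_left R 0) h4
  have hlow : ∀ᶠ k in atTop, c₀ * S k - K ≤ freeEnergy V F (ε k) (u k) := by
    filter_upwards [hev] with k h2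
    exact (hSbound k h2).2
  have htend : Tendsto (fun k => c₀ * S k - K) atTop atTop := by
    have := tendsto_atTop_add_const_right atTop (-K) (hStend.const_mul_atTop hc₀)
    simpa [sub_eq_add_neg] using this
  exact tendsto_atTop_mono' atTop hlow htend
end

section
/- Let V : ℝ → ℝ be measurable with V(x) ≥ C₄x⁴ − C₂x² for all x (C₂, C₄ > 0), let F : ℝ → ℝ be measurable and nonnegative, and let ε > 0. Then there exists a constant C (depending only on C₂, C₄ and ε) such that for every probability density u on ℝ with finite fourth moment, Υ_ε(u) ≥ ∫_ℝ x² u(x) dx − C. -/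
open MeasureTheory Real

theorem stmt8
    (V : ℝ → ℝ) (hVmeas : Measurable V)
    (C₂ C₄ : ℝ) (hC₂ : 0 < C₂) (hC₄ : 0 < C₄)
    (hVgrowth : ∀ x, C₄ * x ^ 4 - C₂ * x ^ 2 ≤ V x)
    (F : ℝ → ℝ) (hFmeas : Measurable F) (hFpos : ∀ x, 0 ≤ F x)
    (ε : ℝ) (hε : 0 < ε) :
    ∃ C : ℝ, ∀ u : ℝ → ℝ, IsProbDensity u →
      Integrable (fun x : ℝ => x ^ 4 * u x) →
      Integrable (fun x : ℝ => V x * u x) →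
      (∫ x : ℝ, x ^ 2 * u x) - C ≤ freeEnergy V F ε u := by
  set G : ℝ := ∫ x : ℝ, Real.exp (-x ^ 2) with hGdef
  set K : ℝ := (1 + ε / 2 + C₂) ^ 2 / (4 * C₄) with hKdef
  have hexp : Integrable (fun x : ℝ => Real.exp (-x ^ 2)) := by
    have := integrable_exp_neg_mul_sq (b := 1) one_pos
    simpa using this
  have hG0 : 0 ≤ G := integral_nonneg fun x => (Real.exp_pos _).le
  refine ⟨K + ε / 2 * G, ?_⟩
  rintro u ⟨hum, hunn, huint1⟩ hx4 hVu
  have hu : Integrable u := by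
    by_contra h
    rw [integral_undef h] at huint1
    norm_num at huint1
  have hx2 : Integrable (fun x : ℝ => x ^ 2 * u x) := by
    refine (hu.add hx4).mono' ((measurable_id.pow_const 2).mul hum).aestronglyMeasurable ?_
    filter_upwards with x
    have h1 : 0 ≤ x ^ 2 * u x := mul_nonneg (sq_nonneg x) (hunn x)
    have h2 : x ^ 2 * u x ≤ u x + x ^ 4 * u x := by
      nlinarith [hunn x, sq_nonneg (x ^ 2 - 1), sq_nonneg x]
    simp only [Pi.add_apply, Real.norm_eq_abs, abs_of_nonneg h1]
    exact h2
  have hx2nn : 0 ≤ ∫ x : ℝ, x ^ 2 * u x :=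
    integral_nonneg fun x => mul_nonneg (sq_nonneg x) (hunn x)
  -- interaction term nonneg
  have hFnn : 0 ≤ ∫ x : ℝ, ∫ y : ℝ, F (x - y) * u x * u y :=
    integral_nonneg fun x => integral_nonneg fun y =>
      mul_nonneg (mul_nonneg (hFpos _) (hunn x)) (hunn y)
  -- V term bound
  have hVbound : (1 + ε / 2) * (∫ x : ℝ, x ^ 2 * u x) - K ≤ ∫ x : ℝ, V x * u x := by
    have hint2 : Integrable (fun x : ℝ => ((1 + ε / 2) * x ^ 2 - K) * u x) := by
      have : Integrable (fun x : ℝ => (1 + ε / 2) * (x ^ 2 * u x) - K * u x) :=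
        (hx2.const_mul _).sub (hu.const_mul K)
      refine this.congr ?_
      filter_upwards with x
      ring
    have hmono : (∫ x : ℝ, ((1 + ε / 2) * x ^ 2 - K) * u x) ≤ ∫ x : ℝ, V x * u x := by
      refine integral_mono hint2 hVu fun x => ?_
      refine mul_le_mul_of_nonneg_right ?_ (hunn x)
      have h := hVgrowth x
      have hKq : 4 * C₄ * K = (1 + ε / 2 + C₂) ^ 2 := by
        rw [hKdef]; field_simp
      have hK : (1 + ε / 2 + C₂) * x ^ 2 ≤ C₄ * x ^ 4 + K := by
        nlinarith [sq_nonneg (2 * C₄ * x ^ 2 - (1 + ε / 2 + C₂)), hC₄, hKq]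
      nlinarith
    have heq : (∫ x : ℝ, ((1 + ε / 2) * x ^ 2 - K) * u x)
        = (1 + ε / 2) * (∫ x : ℝ, x ^ 2 * u x) - K * (∫ x : ℝ, u x) := by
      rw [show (fun x : ℝ => ((1 + ε / 2) * x ^ 2 - K) * u x)
          = fun x : ℝ => (1 + ε / 2) * (x ^ 2 * u x) - K * u x by funext x; ring]
      rw [integral_sub (hx2.const_mul _) (hu.const_mul K), integral_const_mul, integral_const_mul]
    rw [heq, huint1] at hmono
    linarith
  -- entropy bound
  have hent : -(∫ x : ℝ, x ^ 2 * u x) - G ≤ ∫ x : ℝ, u x * Real.log (u x) := by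
    by_cases hint : Integrable (fun x : ℝ => u x * Real.log (u x))
    · have hN : Integrable (fun x : ℝ => -(x ^ 2 * u x)) := hx2.neg'
      have hA : Integrable (fun x : ℝ => -(x ^ 2 * u x) + u x) := by
        exact hN.add hu
      have hlow : Integrable (fun x : ℝ => -(x ^ 2 * u x) + u x - Real.exp (-x ^ 2)) := by
        exact hA.sub hexp
      have hmono : (∫ x : ℝ, (-(x ^ 2 * u x) + u x - Real.exp (-x ^ 2)))
          ≤ ∫ x : ℝ, u x * Real.log (u x) := by
        refine integral_mono hlow hint fun x => ?_
        rcases eq_or_lt_of_le (hunn x) with h0 | hpos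
        · rw [← h0]
          have := (Real.exp_pos (-x ^ 2)).le
          simp
          linarith
        · have hlog := Real.log_le_sub_one_of_pos
            (div_pos (Real.exp_pos (-x ^ 2)) hpos)
          rw [Real.log_div (Real.exp_pos _).ne' hpos.ne', Real.log_exp] at hlog
          have hdiv : Real.exp (-x ^ 2) / u x * u x = Real.exp (-x ^ 2) := by
            field_simp
          nlinarith [hpos]
      have heq : (∫ x : ℝ, (-(x ^ 2 * u x) + u x - Real.exp (-x ^ 2)))
          = -(∫ x : ℝ, x ^ 2 * u x) + (∫ x : ℝ, u x) - G := by
        rw [integral_sub hA hexp, integral_add hN hu, integral_neg]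
      rw [heq, huint1] at hmono
      linarith
    · rw [integral_undef hint]
      linarith
  -- combine
  unfold freeEnergy
  have hent2 : ε / 2 * (-(∫ x : ℝ, x ^ 2 * u x) - G) ≤ ε / 2 * (∫ x : ℝ, u x * Real.log (u x)) :=
    mul_le_mul_of_nonneg_left hent (by linarith)
  nlinarith [hε, hx2nn]
end

section
/- Let V : ℝ → ℝ be measurable, let F : ℝ → ℝ be an even polynomial of degree 2n ≥ 2 with F(0) = 0 such that F and F'' are convex, and let ε > 0. Then for every probability density u on ℝ with finite moments of all orders, Υ_ε(u) ≥ −ε/4 − 4ε e⁻¹ + ∫_ℝ ( V(x) + (F''(0)/2)x² − (ε/4)x² ) u(x) dx − (F''(0)/2) ( ∫_ℝ x u(x) dx )². In particular, if ∫_ℝ x u(x) dx = 0, then Υ_ε(u) ≥ −ε/4 − 4ε e⁻¹ + ∫_ℝ ( V(x) + (F''(0)/2)x² − (ε/4)x² ) u(x) dx. -/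
open MeasureTheory Real

lemma aux_entropy (s t : ℝ) (ht : 0 ≤ t) : s * t - Real.exp s ≤ t * Real.log t := by
  rcases eq_or_lt_of_le ht with h | h
  · have := Real.exp_pos s
    simp [← h]
    nlinarith
  · have h1 : Real.log (Real.exp s / t) ≤ Real.exp s / t - 1 :=
      Real.log_le_sub_one_of_pos (by positivity)
    rw [Real.log_div (Real.exp_ne_zero s) h.ne', Real.log_exp] at h1
    have h2 := mul_le_mul_of_nonneg_left h1 ht
    have h3 : t * (Real.exp s / t) = Real.exp s := by field_simp
    nlinarith

lemma aux_weight_int (u : ℝ → ℝ) (hmom : HasAllMoments u) (d : ℕ) :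
    Integrable (fun x : ℝ => (1 + |x|) ^ d * u x) := by
  have : (fun x : ℝ => (1 + |x|) ^ d * u x)
      = fun x => ∑ k ∈ Finset.range (d + 1), (d.choose k : ℝ) * (|x| ^ k * u x) := by
    funext x
    rw [add_comm, add_pow, Finset.sum_mul]
    refine Finset.sum_congr rfl fun k _ => ?_
    ring
  rw [this]
  exact integrable_finset_sum _ fun k _ => (hmom k).const_mul _

lemma aux_poly_bound (p : Polynomial ℝ) (z : ℝ) :
    |p.eval z| ≤ (∑ k ∈ Finset.range (p.natDegree + 1), |p.coeff k|) * (1 + |z|) ^ p.natDegree := by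
  rw [Polynomial.eval_eq_sum_range, Finset.sum_mul]
  refine (Finset.abs_sum_le_sum_abs _ _).trans (Finset.sum_le_sum fun k hk => ?_)
  rw [abs_mul, abs_pow]
  refine mul_le_mul_of_nonneg_left ?_ (abs_nonneg _)
  calc |z| ^ k ≤ (1 + |z|) ^ k :=
        pow_le_pow_left₀ (abs_nonneg z) (by linarith [abs_nonneg z]) k
    _ ≤ (1 + |z|) ^ p.natDegree :=
        pow_le_pow_right₀ (by linarith [abs_nonneg z]) (Nat.lt_succ_iff.mp (Finset.mem_range.mp hk))

lemma aux_prod_int (u : ℝ → ℝ) (hu_meas : Measurable u) (hu_nn : ∀ x, 0 ≤ u x)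
    (hmom : HasAllMoments u) (p : Polynomial ℝ) :
    Integrable (fun z : ℝ × ℝ => p.eval (z.1 - z.2) * u z.1 * u z.2)
      ((volume : Measure ℝ).prod volume) := by
  set d := p.natDegree
  set M := ∑ k ∈ Finset.range (d + 1), |p.coeff k| with hM
  have hφ := aux_weight_int u hmom d
  have hmeas : AEStronglyMeasurable (fun z : ℝ × ℝ => p.eval (z.1 - z.2) * u z.1 * u z.2)
      ((volume : Measure ℝ).prod volume) := by
    refine Measurable.aestronglyMeasurable ?_
    exact (((p.continuous.measurable).comp (measurable_fst.sub measurable_snd)).mul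
      (hu_meas.comp measurable_fst)).mul (hu_meas.comp measurable_snd)
  have hbig : Integrable
      (fun z : ℝ × ℝ => (M * ((1 + |z.1|) ^ d * u z.1)) * ((1 + |z.2|) ^ d * u z.2))
      ((volume : Measure ℝ).prod volume) := (hφ.const_mul M).mul_prod hφ
  refine hbig.mono' hmeas (Filter.Eventually.of_forall fun z => ?_)
  have h1 : |p.eval (z.1 - z.2)| ≤ M * (1 + |z.1|) ^ d * (1 + |z.2|) ^ d := by
    refine (aux_poly_bound p _).trans ?_
    rw [mul_assoc]
    refine mul_le_mul_of_nonneg_left ?_ ?_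
    · rw [← mul_pow]
      refine pow_le_pow_left₀ (by positivity) ?_ d
      have := abs_sub (z.1) (z.2)
      nlinarith [abs_nonneg z.1, abs_nonneg z.2]
    · exact Finset.sum_nonneg fun k _ => abs_nonneg _
  have hMnn : 0 ≤ M := Finset.sum_nonneg fun k _ => abs_nonneg _
  have h2 : ‖p.eval (z.1 - z.2) * u z.1 * u z.2‖ = |p.eval (z.1 - z.2)| * u z.1 * u z.2 := by
    rw [norm_eq_abs, abs_mul, abs_mul, abs_of_nonneg (hu_nn _), abs_of_nonneg (hu_nn _)]
  rw [h2]
  calc |p.eval (z.1 - z.2)| * u z.1 * u z.2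
      ≤ M * (1 + |z.1|) ^ d * (1 + |z.2|) ^ d * u z.1 * u z.2 :=
        mul_le_mul_of_nonneg_right (mul_le_mul_of_nonneg_right h1 (hu_nn z.1)) (hu_nn z.2)
    _ = M * ((1 + |z.1|) ^ d * u z.1) * ((1 + |z.2|) ^ d * u z.2) := by ring

lemma aux_F_lower (F : ℝ → ℝ) (q : Polynomial ℝ) (hFq : ∀ x, F x = q.eval x)
    (hFeven : ∀ x, F (-x) = F x) (hF0 : F 0 = 0)
    (hF''conv : ConvexOn ℝ Set.univ (deriv (deriv F))) :
    ∀ z : ℝ, deriv (deriv F) 0 / 2 * z ^ 2 ≤ F z := by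
  have hF : F = fun x => q.eval x := funext hFq
  have hderivF : deriv F = fun x => q.derivative.eval x := by
    funext x; rw [hF]; exact Polynomial.deriv (p := q)
  have hf2 : deriv (deriv F) = fun x => q.derivative.derivative.eval x := by
    rw [hderivF]; funext x; exact Polynomial.deriv (p := q.derivative)
  have hodd : ∀ x, deriv F (-x) = -deriv F x := by
    intro x
    have hcomp : (fun y => F (-y)) = F := funext hFeven
    have h1 : deriv (fun y => F (-y)) x = -deriv F (-x) := deriv_comp_neg F x
    rw [hcomp] at h1
    linarith [h1]
  have heven2 : ∀ x, deriv (deriv F) (-x) = deriv (deriv F) x := by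
    intro x
    have hcomp : (fun y => deriv F (-y)) = fun y => -deriv F y := funext hodd
    have h1 : deriv (fun y => deriv F (-y)) x = -deriv (deriv F) (-x) := deriv_comp_neg _ x
    have h2 : deriv (fun y => -deriv F y) x = -deriv (deriv F) x := deriv.neg
    rw [hcomp, h2] at h1
    linarith
  set c := deriv (deriv F) 0 with hc
  have hf2ge : ∀ x, c ≤ deriv (deriv F) x := by
    intro x
    have h := hF''conv.2 (Set.mem_univ x) (Set.mem_univ (-x))
      (by norm_num : (0:ℝ) ≤ 1/2) (by norm_num : (0:ℝ) ≤ 1/2) (by norm_num)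
    simp only [smul_eq_mul] at h
    have hx0 : (1/2 : ℝ) * x + (1/2) * (-x) = 0 := by ring
    rw [hx0, heven2 x] at h
    linarith
  set G := fun x : ℝ => F x - c / 2 * x ^ 2 with hG
  have hGdiff : Differentiable ℝ G := by
    rw [hG, hF]
    exact q.differentiable.sub ((differentiable_pow 2).const_mul _)
  have hderivG : deriv G = fun x => q.derivative.eval x - c * x := by
    funext x
    rw [hG, hF]
    have h := (q.hasDerivAt x).sub ((hasDerivAt_pow 2 x).const_mul (c/2))
    rw [(show HasDerivAt (fun x => (fun x => Polynomial.eval x q) x - c / 2 * x ^ 2) _ x from h).deriv]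
    norm_num; ring
  have hderivG_diff : Differentiable ℝ (deriv G) := by
    rw [hderivG]
    exact q.derivative.differentiable.sub (differentiable_id.const_mul c)
  have hG2 : ∀ x, 0 ≤ deriv^[2] G x := by
    intro x
    have hit : deriv^[2] G x = deriv (deriv G) x := by
      simp [Function.iterate_succ, Function.iterate_zero]
    rw [hit, hderivG]
    have h := (q.derivative.hasDerivAt x).sub ((hasDerivAt_id' x).const_mul c)
    rw [(show HasDerivAt (fun x => Polynomial.eval x (Polynomial.derivative q) - c * x) _ x from h).deriv]
    have := hf2ge x
    rw [hf2] at this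
    simp only [mul_one]
    linarith
  have hGconv : ConvexOn ℝ Set.univ G :=
    convexOn_univ_of_deriv2_nonneg hGdiff hderivG_diff hG2
  intro z
  have hGeven : G (-z) = G z := by simp only [hG, hFeven, neg_sq]
  have hG0 : G 0 = 0 := by simp [hG, hF0]
  have h := hGconv.2 (Set.mem_univ z) (Set.mem_univ (-z))
    (by norm_num : (0:ℝ) ≤ 1/2) (by norm_num : (0:ℝ) ≤ 1/2) (by norm_num)
  simp only [smul_eq_mul] at h
  have hx0 : (1/2 : ℝ) * z + (1/2) * (-z) = 0 := by ring
  rw [hx0, hG0, hGeven] at h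
  norm_num at h
  have hnn : 0 ≤ G z := h
  simp only [hG] at hnn
  linarith

theorem stmt9
    (V : ℝ → ℝ) (hVmeas : Measurable V)
    (n : ℕ) (hn : 1 ≤ n) (F : ℝ → ℝ) (q : Polynomial ℝ)
    (hFq : ∀ x, F x = q.eval x) (hFdeg : q.natDegree = 2 * n)
    (hFeven : ∀ x, F (-x) = F x) (hF0 : F 0 = 0)
    (hFconv : ConvexOn ℝ Set.univ F)
    (hF''conv : ConvexOn ℝ Set.univ (deriv (deriv F)))
    (ε : ℝ) (hε : 0 < ε)
    (u : ℝ → ℝ) (hu : IsProbDensity u) (hmom : HasAllMoments u)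
    (hVu : Integrable (fun x : ℝ => V x * u x)) :
    (-(ε / 4) - 4 * ε * Real.exp (-1)
        + (∫ x : ℝ, (V x + deriv (deriv F) 0 / 2 * x ^ 2 - ε / 4 * x ^ 2) * u x)
        - deriv (deriv F) 0 / 2 * (∫ x : ℝ, x * u x) ^ 2
      ≤ freeEnergy V F ε u)
    ∧ ((∫ x : ℝ, x * u x) = 0 →
        -(ε / 4) - 4 * ε * Real.exp (-1)
          + (∫ x : ℝ, (V x + deriv (deriv F) 0 / 2 * x ^ 2 - ε / 4 * x ^ 2) * u x)
        ≤ freeEnergy V F ε u) := by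
  obtain ⟨hu_meas, hu_nn, hu_int1⟩ := hu
  set c := deriv (deriv F) 0 with hc
  have hFlow : ∀ z : ℝ, c / 2 * z ^ 2 ≤ F z := aux_F_lower F q hFq hFeven hF0 hF''conv
  have hu_int : Integrable u := by simpa using hmom 0
  have hx2u : Integrable (fun x : ℝ => x ^ 2 * u x) := by
    have : (fun x : ℝ => x ^ 2 * u x) = fun x => |x| ^ 2 * u x := by
      funext x; rw [sq_abs]
    rw [this]; exact hmom 2
  have hxu : Integrable (fun x : ℝ => x * u x) := by
    refine (hmom 1).mono' ((measurable_id.mul hu_meas).aestronglyMeasurable)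
      (Filter.Eventually.of_forall fun x => ?_)
    rw [norm_eq_abs, abs_mul, abs_of_nonneg (hu_nn x), pow_one]
  set m2 := ∫ x : ℝ, x ^ 2 * u x with hm2
  set m1 := ∫ x : ℝ, x * u x with hm1
  have hm2nn : 0 ≤ m2 := integral_nonneg fun x => mul_nonneg (sq_nonneg x) (hu_nn x)
  -- entropy bound
  have hexpinv : (5/16 : ℝ) ≤ Real.exp (-1) := by
    have hee : Real.exp (-1) * Real.exp 1 = 1 := by
      rw [← Real.exp_add]; norm_num
    nlinarith [Real.exp_one_lt_d9, Real.exp_pos (-1), Real.exp_pos 1]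
  have hent : -(ε/4) - 4 * ε * Real.exp (-1) - ε/4 * m2
      ≤ ε/2 * ∫ x : ℝ, u x * Real.log (u x) := by
    by_cases hA : Integrable (fun x : ℝ => u x * Real.log (u x)) volume
    · have hgauss_int : Integrable (fun x : ℝ => Real.exp (-(1/2 : ℝ) * x ^ 2)) :=
        integrable_exp_neg_mul_sq (by norm_num)
      have hsqrt : Real.sqrt (π / (1/2)) ≤ 3 := by
        rw [show (3:ℝ) = Real.sqrt 9 by
          rw [show (9:ℝ) = 3^2 by norm_num, Real.sqrt_sq]; norm_num]
        exact Real.sqrt_le_sqrt (by nlinarith [Real.pi_le_four])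
      have hpt : ∀ x : ℝ,
          -(1/2) * (x^2 * u x) - Real.exp (-(1/2 : ℝ) * x ^ 2) ≤ u x * Real.log (u x) := by
        intro x
        have h := aux_entropy (-(1/2 : ℝ) * x ^ 2) (u x) (hu_nn x)
        have h2 : (-(1/2 : ℝ) * x ^ 2) * u x = -(1/2) * (x^2 * u x) := by ring
        linarith [h, h2.le, h2.ge]
      have hflow_int : Integrable
          (fun x : ℝ => -(1/2) * (x^2 * u x) - Real.exp (-(1/2 : ℝ) * x ^ 2)) :=
        (hx2u.const_mul _).sub hgauss_int
      have hAle := integral_mono hflow_int hA hpt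
      rw [integral_sub (hx2u.const_mul _) hgauss_int, integral_const_mul,
        integral_gaussian, ← hm2] at hAle
      have h5 := mul_le_mul_of_nonneg_left hAle (by linarith : (0:ℝ) ≤ ε/2)
      have e1 : ε/2 * Real.sqrt (π / (1/2)) ≤ ε/2 * 3 :=
        mul_le_mul_of_nonneg_left hsqrt (by linarith)
      have e3 : (5/4 : ℝ) * ε ≤ 4 * (ε * Real.exp (-1)) := by nlinarith [hexpinv, hε.le]
      nlinarith [h5, e1, e3]
    · rw [integral_undef hA]
      nlinarith [hm2nn, hε.le, mul_nonneg hε.le hm2nn, mul_pos hε (Real.exp_pos (-1))]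
  -- interaction bound
  have hint : c * m2 - c * m1 ^ 2 ≤ ∫ x : ℝ, ∫ y : ℝ, F (x - y) * u x * u y := by
    have hF : F = fun x => q.eval x := funext hFq
    have hIq : Integrable (fun z : ℝ × ℝ => q.eval (z.1 - z.2) * u z.1 * u z.2)
        ((volume : Measure ℝ).prod volume) := aux_prod_int u hu_meas hu_nn hmom q
    set p2 : Polynomial ℝ := Polynomial.C (c/2) * Polynomial.X ^ 2 with hp2
    have hp2eval : ∀ z : ℝ, p2.eval z = c/2 * z^2 := by intro z; simp [hp2]
    have hIp : Integrable (fun z : ℝ × ℝ => c/2 * (z.1 - z.2)^2 * u z.1 * u z.2)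
        ((volume : Measure ℝ).prod volume) := by
      have h := aux_prod_int u hu_meas hu_nn hmom p2
      simpa [hp2eval] using h
    have hiter : (∫ x : ℝ, ∫ y : ℝ, F (x - y) * u x * u y)
        = ∫ z : ℝ × ℝ, q.eval (z.1 - z.2) * u z.1 * u z.2 ∂((volume : Measure ℝ).prod volume) := by
      rw [hF]
      exact integral_integral hIq
    have hmono : (∫ z : ℝ × ℝ, c/2 * (z.1 - z.2)^2 * u z.1 * u z.2
          ∂((volume : Measure ℝ).prod volume))
        ≤ ∫ z : ℝ × ℝ, q.eval (z.1 - z.2) * u z.1 * u z.2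
          ∂((volume : Measure ℝ).prod volume) := by
      refine integral_mono hIp hIq fun z => ?_
      have h1 := hFlow (z.1 - z.2)
      rw [hFq] at h1
      exact mul_le_mul_of_nonneg_right
        (mul_le_mul_of_nonneg_right h1 (hu_nn _)) (hu_nn _)
    have hexp : (fun z : ℝ × ℝ => c/2 * (z.1 - z.2)^2 * u z.1 * u z.2)
        = fun z : ℝ × ℝ => ((fun x : ℝ => c/2 * (x^2 * u x)) z.1 * u z.2
            + (fun x : ℝ => -c * (x * u x)) z.1 * ((fun y : ℝ => y * u y) z.2))
            + u z.1 * ((fun y : ℝ => c/2 * (y^2 * u y)) z.2) := by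
      funext z; simp only; ring
    have hIa : Integrable (fun z : ℝ × ℝ => (fun x : ℝ => c/2 * (x^2 * u x)) z.1 * u z.2)
        ((volume : Measure ℝ).prod volume) := (hx2u.const_mul _).mul_prod hu_int
    have hIb : Integrable (fun z : ℝ × ℝ =>
          (fun x : ℝ => -c * (x * u x)) z.1 * ((fun y : ℝ => y * u y) z.2))
        ((volume : Measure ℝ).prod volume) := (hxu.const_mul _).mul_prod hxu
    have hIc : Integrable (fun z : ℝ × ℝ => u z.1 * ((fun y : ℝ => c/2 * (y^2 * u y)) z.2))
        ((volume : Measure ℝ).prod volume) := hu_int.mul_prod (hx2u.const_mul _)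
    have hIab : Integrable (fun z : ℝ × ℝ =>
          (fun x : ℝ => c/2 * (x^2 * u x)) z.1 * u z.2
          + (fun x : ℝ => -c * (x * u x)) z.1 * ((fun y : ℝ => y * u y) z.2))
        ((volume : Measure ℝ).prod volume) := hIa.add hIb
    have hval : (∫ z : ℝ × ℝ, c/2 * (z.1 - z.2)^2 * u z.1 * u z.2
          ∂((volume : Measure ℝ).prod volume)) = c * m2 - c * m1^2 := by
      rw [hexp, integral_add hIab hIc, integral_add hIa hIb,
        integral_prod_mul ((fun x : ℝ => c/2 * (x^2 * u x))) u,
        integral_prod_mul ((fun x : ℝ => -c * (x * u x))) ((fun y : ℝ => y * u y)),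
        integral_prod_mul u ((fun y : ℝ => c/2 * (y^2 * u y))),
        integral_const_mul, integral_const_mul, hu_int1, ← hm2, ← hm1]
      ring
    rw [hiter]
    linarith [hmono, hval.ge, hval.le]
  -- split of middle integral
  have hfun : (fun x : ℝ => (V x + c / 2 * x ^ 2 - ε / 4 * x ^ 2) * u x)
      = fun x => V x * u x + (c/2 - ε/4) * (x^2 * u x) := by funext x; ring
  have hsplit : (∫ x : ℝ, (V x + c / 2 * x ^ 2 - ε / 4 * x ^ 2) * u x)
      = (∫ x : ℝ, V x * u x) + (c/2 - ε/4) * m2 := by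
    rw [hfun, integral_add hVu (hx2u.const_mul _), integral_const_mul, ← hm2]
  have hmain : -(ε / 4) - 4 * ε * Real.exp (-1)
      + (∫ x : ℝ, (V x + c / 2 * x ^ 2 - ε / 4 * x ^ 2) * u x)
      - c / 2 * m1 ^ 2 ≤ freeEnergy V F ε u := by
    rw [freeEnergy, hsplit]
    nlinarith [hent, hint]
  refine ⟨hmain, fun h0 => ?_⟩
  rw [hsplit]
  rw [h0] at hmain
  rw [hsplit] at hmain
  simpa using hmain
end

section
/- Let V : ℝ → ℝ be an even polynomial with V(0) = 0 and V'' convex, and let F : ℝ → ℝ be an even polynomial with F(0) = 0 and F'' convex. Assume V''(0) + F''(0) > 0. Then for every ε with 0 < ε ≤ 2(V''(0) + F''(0)) and every probability density u on ℝ with finite moments of all orders satisfying ∫_ℝ x u(x) dx = 0, one has Υ_ε(u) ≥ −ε/4 − 4ε e⁻¹. -/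
open MeasureTheory Real

lemma aux_even_convex_min {g : ℝ → ℝ} (hconv : ConvexOn ℝ Set.univ g)
    (heven : ∀ x, g (-x) = g x) (x : ℝ) : g 0 ≤ g x := by
  have h := hconv.2 (Set.mem_univ x) (Set.mem_univ (-x))
    (by norm_num : (0:ℝ) ≤ 1/2) (by norm_num : (0:ℝ) ≤ 1/2) (by norm_num)
  simp only [smul_eq_mul] at h
  rw [heven x] at h
  rw [show (1/2:ℝ) * x + 1/2 * (-x) = 0 by ring] at h
  linarith

lemma aux_ent (t a : ℝ) (ht : 0 ≤ t) : -(a * t) - Real.exp (-a - 1) ≤ t * Real.log t := by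
  rcases eq_or_lt_of_le ht with h0 | h0
  · rw [← h0]
    simp
    positivity
  · have hr : Real.exp (Real.log t + a + 1) = t * Real.exp (a + 1) := by
      rw [show Real.log t + a + 1 = Real.log t + (a + 1) by ring, Real.exp_add, Real.exp_log h0]
    set r := Real.log t + a + 1 with hrdef
    have h1 : 1 - r ≤ Real.exp (-r) := by linarith [Real.add_one_le_exp (-r)]
    have h2 : Real.exp r * (1 - r) ≤ 1 := by
      rcases le_or_gt (1 - r) 0 with h | h
      · nlinarith [Real.exp_pos r]
      · calc Real.exp r * (1 - r) ≤ Real.exp r * Real.exp (-r) :=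
              mul_le_mul_of_nonneg_left h1 (Real.exp_pos r).le
          _ = 1 := by rw [← Real.exp_add]; simp
    rw [hr] at h2
    have h3 := mul_le_mul_of_nonneg_right h2 (Real.exp_pos (-a-1)).le
    have h5 : t * Real.exp (a+1) * (1 - r) * Real.exp (-a-1)
        = t * (1 - r) := by
      have hE : Real.exp (a+1) * Real.exp (-a-1) = 1 := by
        rw [← Real.exp_add]; norm_num
      calc t * Real.exp (a+1) * (1 - r) * Real.exp (-a-1)
          = t * (1 - r) * (Real.exp (a+1) * Real.exp (-a-1)) := by ring
        _ = t * (1 - r) := by rw [hE, mul_one]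
    rw [h5, one_mul, hrdef] at h3
    nlinarith [h3]


lemma aux_poly_bound_s10 (q : Polynomial ℝ) (t : ℝ) :
    |q.eval t| ≤ (∑ i ∈ Finset.range (q.natDegree + 1), |q.coeff i|) * (1 + |t|) ^ q.natDegree := by
  rw [Polynomial.eval_eq_sum_range]
  refine le_trans (Finset.abs_sum_le_sum_abs _ _) ?_
  rw [Finset.sum_mul]
  apply Finset.sum_le_sum
  intro i hi
  rw [abs_mul, abs_pow]
  refine mul_le_mul_of_nonneg_left ?_ (abs_nonneg _)
  calc |t| ^ i ≤ (1 + |t|) ^ i := pow_le_pow_left₀ (abs_nonneg t) (by linarith [abs_nonneg t]) i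
    _ ≤ (1 + |t|) ^ q.natDegree :=
        pow_le_pow_right₀ (by linarith [abs_nonneg t]) (Finset.mem_range_succ_iff.mp hi)

lemma aux_mom (u : ℝ → ℝ) (hmom : HasAllMoments u) (n : ℕ) :
    Integrable (fun x : ℝ => (1 + |x|) ^ n * u x) := by
  have key : ∀ x : ℝ, (1 + |x|) ^ n * u x
      = ∑ k ∈ Finset.range (n+1), (n.choose k : ℝ) * (|x| ^ k * u x) := by
    intro x
    rw [add_comm, add_pow, Finset.sum_mul]
    refine Finset.sum_congr rfl fun k _ => by ring
  exact (integrable_finset_sum _ fun k _ => ((hmom k).const_mul ((n.choose k : ℝ)))).congr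
    (Filter.Eventually.of_forall fun x => (key x).symm)

lemma aux_polyint (q : Polynomial ℝ) (u : ℝ → ℝ) (humeas : Measurable u)
    (hupos : ∀ x, 0 ≤ u x) (hmom : HasAllMoments u) :
    Integrable (fun x => q.eval x * u x) := by
  set C := ∑ i ∈ Finset.range (q.natDegree + 1), |q.coeff i| with hCdef
  refine Integrable.mono' ((aux_mom u hmom q.natDegree).const_mul C)
    ((q.continuous.measurable.mul humeas).aestronglyMeasurable) ?_
  filter_upwards with x
  rw [Real.norm_eq_abs, abs_mul]
  calc |q.eval x| * |u x| ≤ (C * (1 + |x|) ^ q.natDegree) * |u x| :=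
        mul_le_mul_of_nonneg_right (aux_poly_bound_s10 q x) (abs_nonneg _)
    _ = C * ((1 + |x|) ^ q.natDegree * u x) := by rw [abs_of_nonneg (hupos x)]; ring

lemma aux_quad_lb (V : ℝ → ℝ) (p : Polynomial ℝ) (hVp : ∀ x, V x = p.eval x)
    (hVeven : ∀ x, V (-x) = V x) (hV0 : V 0 = 0)
    (hVconv : ConvexOn ℝ Set.univ (deriv (deriv V))) (x : ℝ) :
    deriv (deriv V) 0 / 2 * x ^ 2 ≤ V x := by
  have hVfun : V = fun y => p.eval y := funext hVp
  subst hVfun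
  -- second derivative is even
  have hVneg : (fun y : ℝ => p.eval (-y)) = fun y => p.eval y := funext hVeven
  have hodd : ∀ y : ℝ, deriv (fun z : ℝ => p.eval z) (-y) = -deriv (fun z : ℝ => p.eval z) y := by
    intro y
    have h1 : deriv (fun z : ℝ => p.eval (-z)) y = -deriv (fun z : ℝ => p.eval z) (-y) :=
      deriv_comp_neg (fun w : ℝ => p.eval w) y
    rw [hVneg] at h1
    linarith
  have hder : (fun y : ℝ => deriv (fun z : ℝ => p.eval z) (-y))
      = fun y : ℝ => -(deriv (fun z : ℝ => p.eval z) y) := funext hodd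
  have heven2 : ∀ y : ℝ, deriv (deriv (fun z : ℝ => p.eval z)) (-y)
      = deriv (deriv (fun z : ℝ => p.eval z)) y := by
    intro y
    have h1 : deriv (fun z : ℝ => deriv (fun w : ℝ => p.eval w) (-z)) y
        = -deriv (deriv (fun z : ℝ => p.eval z)) (-y) :=
      deriv_comp_neg (deriv (fun z : ℝ => p.eval z)) y
    rw [hder] at h1
    rw [deriv.fun_neg] at h1
    linarith
  set c := deriv (deriv (fun z : ℝ => p.eval z)) 0 with hcdef
  have hVlb : ∀ y : ℝ, c ≤ deriv (deriv (fun z : ℝ => p.eval z)) y :=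
    fun y => aux_even_convex_min hVconv heven2 y
  -- express deriv (deriv V)
  have hd1 : deriv (fun z : ℝ => p.eval z) = fun z : ℝ => p.derivative.eval z :=
    funext fun z => p.deriv
  have hd2 : deriv (deriv (fun z : ℝ => p.eval z)) = fun z : ℝ => p.derivative.derivative.eval z := by
    rw [hd1]; exact funext fun z => p.derivative.deriv
  -- the function W
  set W : ℝ → ℝ := fun y => p.eval y - c / 2 * y ^ 2 with hWdef
  have hW1 : ∀ y : ℝ, HasDerivAt W (p.derivative.eval y - c / 2 * (2 * y ^ 1)) y := by
    intro y
    exact (p.hasDerivAt y).sub ((hasDerivAt_pow 2 y).const_mul (c / 2))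
  have hWd : deriv W = fun y : ℝ => p.derivative.eval y - c * y := by
    funext y
    rw [(hW1 y).deriv]; ring
  have hW2 : ∀ y : ℝ, HasDerivAt (deriv W) (p.derivative.derivative.eval y - c) y := by
    intro y
    rw [hWd]
    have := (p.derivative.hasDerivAt y).sub ((hasDerivAt_id y).const_mul c)
    rw [mul_one] at this; exact this
  have hWconv : ConvexOn ℝ Set.univ W := by
    refine convexOn_univ_of_deriv2_nonneg
      (fun y => ((hW1 y).differentiableAt)) (fun y => ((hW2 y).differentiableAt)) ?_
    intro y
    have hit : deriv^[2] W y = deriv (deriv W) y := rfl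
    rw [hit, (hW2 y).deriv]
    have := hVlb y
    rw [hd2] at this
    linarith
  have hVe : ∀ y : ℝ, p.eval (-y) = p.eval y := hVeven
  have hV0' : p.eval 0 = 0 := hV0
  have hWeven : ∀ y, W (-y) = W y := by
    intro y
    simp only [hWdef]
    rw [hVe y]; ring
  have h0 : W 0 ≤ W x := aux_even_convex_min hWconv hWeven x
  simp only [hWdef] at h0
  show c / 2 * x ^ 2 ≤ p.eval x
  nlinarith [h0, hV0']

theorem stmt10
    (V F : ℝ → ℝ) (p q : Polynomial ℝ)
    (hVp : ∀ x, V x = p.eval x) (hVeven : ∀ x, V (-x) = V x) (hV0 : V 0 = 0)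
    (hVconv : ConvexOn ℝ Set.univ (deriv (deriv V)))
    (hFq : ∀ x, F x = q.eval x) (hFeven : ∀ x, F (-x) = F x) (hF0 : F 0 = 0)
    (hFconv : ConvexOn ℝ Set.univ (deriv (deriv F)))
    (hsyn : 0 < deriv (deriv V) 0 + deriv (deriv F) 0)
    (ε : ℝ) (hε : 0 < ε) (hεle : ε ≤ 2 * (deriv (deriv V) 0 + deriv (deriv F) 0))
    (u : ℝ → ℝ) (hu : IsProbDensity u) (hmom : HasAllMoments u)
    (hcentered : (∫ x : ℝ, x * u x) = 0) :
    -(ε / 4) - 4 * ε * Real.exp (-1) ≤ freeEnergy V F ε u := by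
  obtain ⟨humeas, hupos, huint1⟩ := hu
  set cV := deriv (deriv V) 0 with hcV
  set cF := deriv (deriv F) 0 with hcF
  -- basic integrabilities
  have hu0 : Integrable u := (hmom 0).congr (Filter.Eventually.of_forall fun x => by simp)
  have hm1int : Integrable (fun x : ℝ => x * u x) := by
    refine (hmom 1).mono' ((measurable_id.mul humeas).aestronglyMeasurable) ?_
    filter_upwards with x
    simp [Real.norm_eq_abs, abs_mul, abs_of_nonneg (hupos x)]
  have hm2int : Integrable (fun x : ℝ => x ^ 2 * u x) :=
    (hmom 2).congr (Filter.Eventually.of_forall fun x => by simp [sq_abs])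
  set m2 := ∫ x : ℝ, x ^ 2 * u x with hm2def
  have hm2pos : 0 ≤ m2 :=
    integral_nonneg fun x => mul_nonneg (sq_nonneg x) (hupos x)
  -- quadratic lower bounds
  have hVq : ∀ x, cV / 2 * x ^ 2 ≤ V x := aux_quad_lb V p hVp hVeven hV0 hVconv
  have hFquad : ∀ t, cF / 2 * t ^ 2 ≤ F t := aux_quad_lb F q hFq hFeven hF0 hFconv
  -- Term A : potential
  have hVuint : Integrable (fun x => V x * u x) := by
    simp only [hVp]
    exact aux_polyint p u humeas hupos hmom
  have hA : cV / 2 * m2 ≤ ∫ x : ℝ, V x * u x := by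
    rw [hm2def, ← integral_const_mul]
    refine integral_mono (hm2int.const_mul _) hVuint fun x => ?_
    calc cV / 2 * (x ^ 2 * u x) = (cV / 2 * x ^ 2) * u x := by ring
      _ ≤ V x * u x := mul_le_mul_of_nonneg_right (hVq x) (hupos x)
  -- Entropy term
  have hgauss : Integrable (fun x : ℝ => Real.exp (-(1/2) * x ^ 2)) :=
    integrable_exp_neg_mul_sq (by norm_num)
  set S := Real.sqrt (π / (1/2)) with hSdef
  have hE : -((1/2) * m2 + Real.exp (-1) * S) ≤ ∫ x : ℝ, u x * Real.log (u x) := by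
    set φ : ℝ → ℝ := fun x => (1/2) * (x ^ 2 * u x) + Real.exp (-1) * Real.exp (-(1/2) * x ^ 2)
      with hφdef
    have hφint : Integrable φ := (hm2int.const_mul _).add (hgauss.const_mul _)
    have hφval : ∫ x : ℝ, φ x = (1/2) * m2 + Real.exp (-1) * S := by
      simp only [hφdef]
      rw [integral_add (hm2int.const_mul _) (hgauss.const_mul _), integral_const_mul,
        integral_const_mul, integral_gaussian]
    have hpt : ∀ x : ℝ, -φ x ≤ u x * Real.log (u x) := by
      intro x
      have h := aux_ent (u x) (x ^ 2 / 2) (hupos x)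
      have he : Real.exp (-(x ^ 2 / 2) - 1) = Real.exp (-1) * Real.exp (-(1/2) * x ^ 2) := by
        rw [← Real.exp_add]; ring_nf
      rw [he] at h
      simp only [hφdef]
      nlinarith [h]
    by_cases hEint : Integrable (fun x : ℝ => u x * Real.log (u x))
    · have := integral_mono hφint.neg hEint hpt
      simp only [Pi.neg_apply] at this
      rw [integral_neg, hφval] at this
      linarith
    · rw [integral_undef hEint, ← hφval]
      have h0 : 0 ≤ ∫ x : ℝ, φ x := by
        refine integral_nonneg fun x => ?_
        simp only [hφdef, Pi.zero_apply]
        have := Real.exp_pos (-(1/2) * x ^ 2)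
        have := Real.exp_pos (-1 : ℝ)
        nlinarith [mul_nonneg (sq_nonneg x) (hupos x)]
      linarith
  -- Interaction term
  have hFmeas : Measurable F := by
    have : F = fun t => q.eval t := funext hFq
    rw [this]; exact q.continuous.measurable
  set n := q.natDegree with hndef
  set C := ∑ i ∈ Finset.range (n + 1), |q.coeff i| with hCdef
  have hC : 0 ≤ C := Finset.sum_nonneg fun _ _ => abs_nonneg _
  have hFbd2 : ∀ x y : ℝ, |F (x - y)| ≤ C * ((1 + |x|) ^ n * (1 + |y|) ^ n) := by
    intro x y
    have h1 : |F (x - y)| ≤ C * (1 + |x - y|) ^ n := by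
      rw [hFq]; exact aux_poly_bound_s10 q (x - y)
    refine h1.trans (mul_le_mul_of_nonneg_left ?_ hC)
    rw [← mul_pow]
    refine pow_le_pow_left₀ (by positivity) ?_ n
    nlinarith [abs_sub x y, abs_nonneg x, abs_nonneg y, mul_nonneg (abs_nonneg x) (abs_nonneg y)]
  have honeu : Integrable (fun y : ℝ => (1 + |y|) ^ n * u y) := aux_mom u hmom n
  set K := ∫ y : ℝ, (1 + |y|) ^ n * u y with hKdef
  have hK : 0 ≤ K := integral_nonneg fun y => mul_nonneg (by positivity) (hupos y)
  have hinner_int : ∀ x : ℝ, Integrable (fun y => F (x - y) * u y) := by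
    intro x
    refine (honeu.const_mul (C * (1 + |x|) ^ n)).mono'
      (((hFmeas.comp (measurable_const.sub measurable_id)).mul humeas).aestronglyMeasurable) ?_
    filter_upwards with y
    rw [Real.norm_eq_abs, abs_mul, abs_of_nonneg (hupos y)]
    calc |F (x - y)| * u y ≤ (C * ((1 + |x|) ^ n * (1 + |y|) ^ n)) * u y :=
          mul_le_mul_of_nonneg_right (hFbd2 x y) (hupos y)
      _ = C * (1 + |x|) ^ n * ((1 + |y|) ^ n * u y) := by ring
  have h2int : ∀ x : ℝ, Integrable (fun y : ℝ => (x - y) ^ 2 * u y) := by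
    intro x
    have i1 : Integrable (fun y : ℝ => x ^ 2 * u y) := hu0.const_mul _
    have i2 : Integrable (fun y : ℝ => (2 * x) * (y * u y)) := hm1int.const_mul _
    have i12 : Integrable (fun y : ℝ => x ^ 2 * u y - (2 * x) * (y * u y)) := i1.sub i2
    have i3 : Integrable (fun y : ℝ => (x ^ 2 * u y - (2 * x) * (y * u y)) + y ^ 2 * u y) :=
      i12.add hm2int
    exact i3.congr (Filter.Eventually.of_forall fun y => by ring)
  have hval : ∀ x : ℝ, (∫ y : ℝ, (x - y) ^ 2 * u y) = x ^ 2 + m2 := by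
    intro x
    have hrw : (fun y : ℝ => (x - y) ^ 2 * u y)
        = fun y : ℝ => (x ^ 2 * u y - (2 * x) * (y * u y)) + y ^ 2 * u y := by
      funext y; ring
    have i1 : Integrable (fun y : ℝ => x ^ 2 * u y) := hu0.const_mul _
    have i2 : Integrable (fun y : ℝ => (2 * x) * (y * u y)) := hm1int.const_mul _
    have i12 : Integrable (fun y : ℝ => x ^ 2 * u y - (2 * x) * (y * u y)) := i1.sub i2
    rw [hrw, integral_add i12 hm2int, integral_sub i1 i2, integral_const_mul, integral_const_mul,
      huint1, hcentered, ← hm2def]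
    ring
  have hGlow : ∀ x : ℝ, cF / 2 * (x ^ 2 + m2) ≤ ∫ y : ℝ, F (x - y) * u y := by
    intro x
    have h := integral_mono ((h2int x).const_mul (cF / 2)) (hinner_int x) (fun y => ?_)
    · rw [integral_const_mul, hval x] at h
      exact h
    · calc cF / 2 * ((x - y) ^ 2 * u y) = (cF / 2 * (x - y) ^ 2) * u y := by ring
        _ ≤ F (x - y) * u y := mul_le_mul_of_nonneg_right (hFquad (x - y)) (hupos y)
  have hpull : ∀ x : ℝ, (∫ y : ℝ, F (x - y) * u x * u y) = u x * ∫ y : ℝ, F (x - y) * u y := by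
    intro x
    rw [← integral_const_mul]
    congr 1
    funext y
    ring
  have hGbd : ∀ x : ℝ, |∫ y : ℝ, F (x - y) * u y| ≤ C * (1 + |x|) ^ n * K := by
    intro x
    calc |∫ y : ℝ, F (x - y) * u y| ≤ ∫ y : ℝ, |F (x - y) * u y| := by
          have h := norm_integral_le_integral_norm (μ := volume)
            (f := fun y : ℝ => F (x - y) * u y)
          simp only [Real.norm_eq_abs] at h
          exact h
      _ ≤ ∫ y : ℝ, (C * (1 + |x|) ^ n) * ((1 + |y|) ^ n * u y) := by
          refine integral_mono (hinner_int x).abs (honeu.const_mul _) fun y => ?_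
          rw [abs_mul, abs_of_nonneg (hupos y)]
          calc |F (x - y)| * u y ≤ (C * ((1 + |x|) ^ n * (1 + |y|) ^ n)) * u y :=
                mul_le_mul_of_nonneg_right (hFbd2 x y) (hupos y)
            _ = C * (1 + |x|) ^ n * ((1 + |y|) ^ n * u y) := by ring
      _ = C * (1 + |x|) ^ n * K := by rw [integral_const_mul, hKdef]
  have houter_int : Integrable (fun x : ℝ => ∫ y : ℝ, F (x - y) * u x * u y) := by
    have hunc : Measurable (fun z : ℝ × ℝ => F (z.1 - z.2) * u z.1 * u z.2) :=
      ((hFmeas.comp (measurable_fst.sub measurable_snd)).mul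
        (humeas.comp measurable_fst)).mul (humeas.comp measurable_snd)
    refine ((aux_mom u hmom n).const_mul (C * K)).mono'
      (hunc.stronglyMeasurable.integral_prod_right').aestronglyMeasurable ?_
    filter_upwards with x
    calc ‖∫ y : ℝ, F (x - y) * u x * u y‖
        = u x * |∫ y : ℝ, F (x - y) * u y| := by
          rw [hpull x, Real.norm_eq_abs, abs_mul, abs_of_nonneg (hupos x)]
      _ ≤ u x * (C * (1 + |x|) ^ n * K) := mul_le_mul_of_nonneg_left (hGbd x) (hupos x)
      _ = C * K * ((1 + |x|) ^ n * u x) := by ring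
  have hT : cF * m2 ≤ ∫ x : ℝ, ∫ y : ℝ, F (x - y) * u x * u y := by
    have hl : Integrable (fun x : ℝ => cF / 2 * (x ^ 2 * u x) + (cF / 2 * m2) * u x) :=
      (hm2int.const_mul _).add (hu0.const_mul _)
    have h := integral_mono hl houter_int (fun x => ?_)
    · rw [integral_add (hm2int.const_mul _) (hu0.const_mul _), integral_const_mul,
        integral_const_mul, huint1, ← hm2def] at h
      linarith
    · rw [hpull x]
      calc cF / 2 * (x ^ 2 * u x) + (cF / 2 * m2) * u x
          = u x * (cF / 2 * (x ^ 2 + m2)) := by ring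
        _ ≤ u x * ∫ y : ℝ, F (x - y) * u y :=
            mul_le_mul_of_nonneg_left (hGlow x) (hupos x)
  -- final assembly
  have hS8 : S ≤ 8 := by
    rw [hSdef, show π / (1/2 : ℝ) = 2 * π by ring]
    calc Real.sqrt (2 * π) ≤ Real.sqrt 64 := by
          refine Real.sqrt_le_sqrt ?_
          nlinarith [Real.pi_le_four]
      _ = 8 := by
          rw [show (64 : ℝ) = 8 ^ 2 by norm_num, Real.sqrt_sq (by norm_num : (0:ℝ) ≤ 8)]
  have h1 := mul_le_mul_of_nonneg_left hE (by positivity : (0:ℝ) ≤ ε / 2)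
  have h2 : 0 ≤ (cV + cF - ε / 2) * m2 :=
    mul_nonneg (by linarith) hm2pos
  have h3 : 0 ≤ ε * Real.exp (-1) * (8 - S) :=
    mul_nonneg (mul_nonneg hε.le (Real.exp_pos (-1)).le) (by linarith)
  rw [freeEnergy]
  linarith [h1, h2, h3, hA, hT, hε.le]
end

section
/- Let u be a probability density on ℝ with ∫_ℝ x² u(x) dx ≤ M. Then for every R > 0, −∫_ℝ u(x) log u(x) 1_{u(x) < 1} 1_{|x| > R} dx ≤ M/R + 8e⁻¹ e^{−R/2}. -/
open MeasureTheory Real Set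

/-- `log t ≤ t / e` for `t > 0`. -/
lemma log_le_div_e {t : ℝ} (ht : 0 < t) : Real.log t ≤ t * Real.exp (-1) := by
  have h := Real.log_le_sub_one_of_pos (mul_pos ht (Real.exp_pos (-1)))
  rw [Real.log_mul ht.ne' (Real.exp_pos (-1)).ne', Real.log_exp] at h
  linarith

/-- `-(a log a) ≤ 2 e⁻¹ √a` for `a > 0`. -/
lemma neg_mul_log_le {a : ℝ} (ha : 0 < a) :
    -(a * Real.log a) ≤ 2 * Real.exp (-1) * Real.sqrt a := by
  have hsa : 0 < Real.sqrt a := Real.sqrt_pos.mpr ha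
  have hlog : Real.log a = 2 * Real.log (Real.sqrt a) := by
    rw [Real.log_sqrt ha.le]; ring
  have h1 : Real.log (Real.sqrt a)⁻¹ ≤ (Real.sqrt a)⁻¹ * Real.exp (-1) :=
    log_le_div_e (inv_pos.mpr hsa)
  have h2 : Real.log (Real.sqrt a)⁻¹ = -Real.log (Real.sqrt a) := Real.log_inv _
  have h3 : a * (Real.sqrt a)⁻¹ = Real.sqrt a := by
    rw [← Real.mul_self_sqrt ha.le]; field_simp; rw [Real.sqrt_sq hsa.le]
  have h4 : -(a * Real.log a) = 2 * (a * Real.log (Real.sqrt a)⁻¹) := by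
    rw [h2, hlog]; ring
  rw [h4]
  calc 2 * (a * Real.log (Real.sqrt a)⁻¹) ≤ 2 * (a * ((Real.sqrt a)⁻¹ * Real.exp (-1))) := by
        nlinarith
    _ = 2 * Real.exp (-1) * Real.sqrt a := by rw [← mul_assoc a, h3]; ring

/-- key pointwise bound -/
lemma pointwise_bound {a s : ℝ} (ha : 0 ≤ a) (hs : 0 ≤ s) :
    -(a * Real.log a) ≤ a * s + 2 * Real.exp (-1) * Real.exp (-s / 2) := by
  rcases eq_or_lt_of_le ha with h0 | h0
  · simp only [← h0, zero_mul, neg_zero, zero_add]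
    positivity
  rcases le_or_gt (Real.exp (-s)) a with hcase | hcase
  · have hlog : -s ≤ Real.log a := by
      rw [← Real.log_exp (-s)]
      exact Real.log_le_log (Real.exp_pos _) hcase
    have h1 : -(a * Real.log a) ≤ a * s := by nlinarith
    have h2 : (0:ℝ) ≤ 2 * Real.exp (-1) * Real.exp (-s / 2) := by positivity
    linarith
  · have h1 : -(a * Real.log a) ≤ 2 * Real.exp (-1) * Real.sqrt a := neg_mul_log_le h0
    have h2 : Real.sqrt a ≤ Real.exp (-s / 2) := by
      have he : Real.sqrt (Real.exp (-s)) = Real.exp (-s / 2) := by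
        have hmul : Real.exp (-s) = Real.exp (-s/2) * Real.exp (-s/2) := by
          rw [← Real.exp_add]; ring_nf
        rw [hmul, Real.sqrt_mul_self (Real.exp_pos _).le]
      calc Real.sqrt a ≤ Real.sqrt (Real.exp (-s)) := Real.sqrt_le_sqrt hcase.le
        _ = Real.exp (-s / 2) := he
    have h3 : (0:ℝ) ≤ a * s := mul_nonneg ha hs
    nlinarith [Real.exp_pos (-1 : ℝ)]

theorem stmt14
    (u : ℝ → ℝ) (hu : IsProbDensity u)
    (M : ℝ) (hmom : Integrable (fun x : ℝ => x ^ 2 * u x))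
    (hM : (∫ x : ℝ, x ^ 2 * u x) ≤ M)
    (R : ℝ) (hR : 0 < R) :
    -(∫ x : ℝ, if u x < 1 ∧ R < |x| then u x * Real.log (u x) else 0)
      ≤ M / R + 8 * Real.exp (-1) * Real.exp (-R / 2) := by
  obtain ⟨hmeas, hpos, hint1⟩ := hu
  have hc0 : (0:ℝ) ≤ 2 * Real.exp (-1) := by positivity
  set F : ℝ → ℝ := fun x => if u x < 1 ∧ R < |x| then u x * Real.log (u x) else 0 with hF
  set G : ℝ → ℝ := fun x => x ^ 2 * u x / R
      + 2 * Real.exp (-1) * ((Ioi R).indicator (fun y => Real.exp (-y / 2)) x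
            + (Iio (-R)).indicator (fun y => Real.exp (y / 2)) x) with hG
  have hind1 : ∀ x : ℝ, 0 ≤ (Ioi R).indicator (fun y => Real.exp (-y / 2)) x := fun x =>
    Set.indicator_nonneg (fun y _ => by positivity) x
  have hind2 : ∀ x : ℝ, 0 ≤ (Iio (-R)).indicator (fun y => Real.exp (y / 2)) x := fun x =>
    Set.indicator_nonneg (fun y _ => by positivity) x
  have hFnonneg : ∀ x, 0 ≤ -F x := by
    intro x
    simp only [hF]
    split_ifs with h
    · have hu0 := hpos x
      have hlog : Real.log (u x) ≤ 0 := Real.log_nonpos hu0 h.1.le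
      nlinarith
    · simp
  have hFG : ∀ x, -F x ≤ G x := by
    intro x
    have hterm : 0 ≤ x ^ 2 * u x / R := by
      have := hpos x; positivity
    simp only [hF, hG]
    split_ifs with h
    · -- key case
      obtain ⟨hu1, hxR⟩ := h
      have hxx : |x| ≤ x ^ 2 / R := by
        rw [le_div_iff₀ hR]
        have : R * |x| ≤ |x| * |x| :=
          mul_le_mul_of_nonneg_right hxR.le (abs_nonneg x)
        calc |x| * R = R * |x| := by ring
          _ ≤ |x| * |x| := this
          _ = x ^ 2 := by rw [abs_mul_abs_self]; ring
      have hpb := pointwise_bound (hpos x) (abs_nonneg x)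
      have hstep : -(u x * Real.log (u x)) ≤ x ^ 2 * u x / R + 2 * Real.exp (-1) * Real.exp (-|x| / 2) := by
        have : u x * |x| ≤ x ^ 2 * u x / R := by
          have := mul_le_mul_of_nonneg_left hxx (hpos x)
          calc u x * |x| ≤ u x * (x ^ 2 / R) := this
            _ = x ^ 2 * u x / R := by ring
        linarith
      have hindge : Real.exp (-|x| / 2)
          ≤ (Ioi R).indicator (fun y => Real.exp (-y / 2)) x
            + (Iio (-R)).indicator (fun y => Real.exp (y / 2)) x := by
        simp only [Set.indicator_apply, Set.mem_Ioi, Set.mem_Iio]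
        rcases lt_abs.mp hxR with hx | hx
        · have h2 : ¬ x < -R := by linarith
          rw [if_pos hx, if_neg h2, abs_of_pos (lt_trans hR hx)]
          simp
        · have hx2 : x < -R := by linarith
          have h1 : ¬ R < x := by linarith
          rw [if_pos hx2, if_neg h1, abs_of_neg (by linarith : x < 0),
            show -(-x) / 2 = x / 2 by ring]
          simp
      nlinarith [mul_le_mul_of_nonneg_left hindge hc0]
    · have h1 := hind1 x
      have h2 := hind2 x
      simp only [neg_zero]
      positivity
  -- integrability
  have hu_int : Integrable u := by
    by_contra hcon
    rw [integral_undef hcon] at hint1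
    norm_num at hint1
  have hexp1 : IntegrableOn (fun y : ℝ => Real.exp (-y / 2)) (Ioi R) := by
    have := exp_neg_integrableOn_Ioi R (by norm_num : (0:ℝ) < 1/2)
    simpa only [show ∀ y : ℝ, -(1/2) * y = -y/2 by intro y; ring] using this
  have hI1 : Integrable ((Ioi R).indicator (fun y => Real.exp (-y / 2))) :=
    hexp1.integrable_indicator measurableSet_Ioi
  have hI2 : Integrable ((Iio (-R)).indicator (fun y => Real.exp (y / 2))) := by
    have heq : (Iio (-R)).indicator (fun y => Real.exp (y / 2))
        = fun x => (Ioi R).indicator (fun y => Real.exp (-y / 2)) (-x) := by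
      funext x
      simp only [Set.indicator_apply, Set.mem_Ioi, Set.mem_Iio]
      rcases lt_or_ge x (-R) with hx | hx
      · rw [if_pos hx, if_pos (by linarith : R < -x), show -(-x) / 2 = x / 2 by ring]
      · rw [if_neg (not_lt.mpr hx), if_neg (by push_neg; linarith : ¬ R < -x)]
    rw [heq]
    exact hI1.comp_neg
  have hGint : Integrable G := by
    apply Integrable.add
    · exact hmom.div_const R
    · exact ((hI1.add hI2).const_mul (2 * Real.exp (-1)))
  have hFmeas : Measurable F := by
    apply Measurable.ite
    · exact MeasurableSet.inter (measurableSet_lt hmeas measurable_const)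
        (measurableSet_lt measurable_const measurable_abs)
    · exact hmeas.mul (hmeas.log)
    · exact measurable_const
  have hFint : Integrable (fun x => -F x) := by
    apply Integrable.mono' hGint (hFmeas.neg.aestronglyMeasurable)
    filter_upwards with x
    rw [Real.norm_eq_abs, Pi.neg_apply, abs_of_nonneg (hFnonneg x)]
    exact hFG x
  have hmono : (∫ x, -F x) ≤ ∫ x, G x := integral_mono hFint hGint hFG
  rw [integral_neg] at hmono
  -- compute ∫ G
  have hval1 : (∫ x, (Ioi R).indicator (fun y => Real.exp (-y / 2)) x)
      = 2 * Real.exp (-R / 2) := by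
    rw [integral_indicator measurableSet_Ioi]
    have : (∫ y in Ioi R, Real.exp (-y / 2)) = ∫ y in Ioi R, (fun z => Real.exp (-z)) (2⁻¹ * y) := by
      congr 1
      funext y
      simp only
      ring_nf
    rw [this, integral_comp_mul_left_Ioi (fun z => Real.exp (-z)) R (by norm_num : (0:ℝ) < 2⁻¹)]
    rw [integral_exp_neg_Ioi]
    simp [smul_eq_mul]
    ring_nf
  have hval2 : (∫ x, (Iio (-R)).indicator (fun y => Real.exp (y / 2)) x)
      = 2 * Real.exp (-R / 2) := by
    have heq : (Iio (-R)).indicator (fun y => Real.exp (y / 2))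
        = fun x => (Ioi R).indicator (fun y => Real.exp (-y / 2)) (-x) := by
      funext x
      simp only [Set.indicator_apply, Set.mem_Ioi, Set.mem_Iio]
      rcases lt_or_ge x (-R) with hx | hx
      · rw [if_pos hx, if_pos (by linarith : R < -x), show -(-x) / 2 = x / 2 by ring]
      · rw [if_neg (not_lt.mpr hx), if_neg (by push_neg; linarith : ¬ R < -x)]
    rw [heq, MeasureTheory.integral_neg_eq_self ((Ioi R).indicator (fun y => Real.exp (-y / 2))) volume]
    exact hval1
  have hGval : (∫ x, G x)
      = (∫ x, x ^ 2 * u x) / R + 2 * Real.exp (-1) * (4 * Real.exp (-R / 2)) := by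
    have hadd : Integrable (fun x : ℝ => (Ioi R).indicator (fun y => Real.exp (-y / 2)) x
        + (Iio (-R)).indicator (fun y => Real.exp (y / 2)) x) := hI1.add hI2
    have h2' : Integrable (fun x : ℝ => 2 * Real.exp (-1)
        * ((Ioi R).indicator (fun y => Real.exp (-y / 2)) x
          + (Iio (-R)).indicator (fun y => Real.exp (y / 2)) x)) := hadd.const_mul _
    simp only [hG]
    rw [integral_add (hmom.div_const R) h2', integral_div, integral_const_mul,
      integral_add hI1 hI2, hval1, hval2]
    ring
  rw [hGval] at hmono
  have hfin : (∫ x, x ^ 2 * u x) / R ≤ M / R :=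
    div_le_div_of_nonneg_right hM hR.le
  have hfin2 : 2 * Real.exp (-1) * (4 * Real.exp (-R / 2)) = 8 * Real.exp (-1) * Real.exp (-R / 2) := by ring
  linarith
end

section
/- For ε > 0 define the probability density v_ε(x) := Z_ε⁻¹ exp[−(2/ε)(V(x) + F(x − a))], where Z_ε = ∫_ℝ exp[−(2/ε)(V(y) + F(y − a))] dy. Then lim_{ε→0} Υ_ε(v_ε) = V(a). -/
open MeasureTheory Real Filter Topology

/-- A stationary measure of the self-stabilizing diffusion: a probability density with
finite moments of all orders satisfying the Gibbs fixed-point equation. -/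
def IsStationaryDensity (V F : ℝ → ℝ) (ε : ℝ) (u : ℝ → ℝ) : Prop :=
  IsProbDensity u ∧ HasAllMoments u ∧
    ∀ x : ℝ, u x =
      (∫ y : ℝ, Real.exp (-(2 / ε) * (V y + interConv F u y)))⁻¹ *
        Real.exp (-(2 / ε) * (V x + interConv F u x))

lemma pow_le_exp_aux {t : ℝ} (ht : 0 ≤ t) (N : ℕ) : t ^ N ≤ N.factorial * Real.exp t := by
  have h := Real.sum_le_exp_of_nonneg ht (N + 1)
  have h2 : t ^ N / N.factorial ≤ Real.exp t :=
    le_trans (Finset.single_le_sum (f := fun i => t ^ i / i.factorial)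
      (fun i _ => by positivity) (Finset.self_mem_range_succ N)) h
  rw [div_le_iff₀ (by positivity)] at h2
  nlinarith [h2]

lemma poly_abs_bound (r : Polynomial ℝ) :
    ∃ C : ℝ, 0 ≤ C ∧ ∀ x : ℝ, |r.eval x| ≤ C * (1 + x ^ (2 * r.natDegree)) := by
  set d := r.natDegree
  refine ⟨∑ i ∈ Finset.range (d + 1), |r.coeff i|,
    Finset.sum_nonneg fun i _ => abs_nonneg _, fun x => ?_⟩
  have hx2 : (0:ℝ) ≤ x ^ (2 * d) := by
    rw [pow_mul]; positivity
  have hxb : ∀ i ∈ Finset.range (d + 1), |x| ^ i ≤ 1 + x ^ (2 * d) := by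
    intro i hi
    have hxabs : |x| ^ (2 * d) = x ^ (2 * d) := by
      rw [← abs_pow, abs_of_nonneg hx2]
    rcases le_total |x| 1 with h | h
    · have : |x| ^ i ≤ 1 := pow_le_one₀ (abs_nonneg x) h
      linarith
    · have hi' : i ≤ 2 * d := by
        have := Finset.mem_range.mp hi; omega
      have : |x| ^ i ≤ |x| ^ (2 * d) := pow_le_pow_right₀ h hi'
      rw [hxabs] at this
      linarith
  calc |r.eval x| = |∑ i ∈ Finset.range (d + 1), r.coeff i * x ^ i| := by
        rw [Polynomial.eval_eq_sum_range]
    _ ≤ ∑ i ∈ Finset.range (d + 1), |r.coeff i * x ^ i| := Finset.abs_sum_le_sum_abs _ _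
    _ = ∑ i ∈ Finset.range (d + 1), |r.coeff i| * |x| ^ i := by
        simp [abs_mul, abs_pow]
    _ ≤ ∑ i ∈ Finset.range (d + 1), |r.coeff i| * (1 + x ^ (2 * d)) :=
        Finset.sum_le_sum fun i hi => mul_le_mul_of_nonneg_left (hxb i hi) (abs_nonneg _)
    _ = (∑ i ∈ Finset.range (d + 1), |r.coeff i|) * (1 + x ^ (2 * d)) := by
        rw [Finset.sum_mul]

lemma aux_int (G : ℝ → ℝ) (hGc : Continuous G) (K : ℝ) (hK : ∀ x, x ^ 2 - K ≤ G x)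
    {t : ℝ} (ht : 0 < t) (r : Polynomial ℝ) :
    Integrable (fun x => r.eval x * Real.exp (-(t * G x))) := by
  obtain ⟨C, hC0, hC⟩ := poly_abs_bound r
  set d := r.natDegree with hd
  set C' : ℝ := C * Real.exp (t * K) * (1 + d.factorial * (2 / t) ^ d) with hC'def
  have hmain : ∀ x : ℝ, |r.eval x * Real.exp (-(t * G x))| ≤ C' * Real.exp (-(t / 2) * x ^ 2) := by
    intro x
    have hx2 : (0:ℝ) ≤ x ^ (2 * d) := by rw [pow_mul]; positivity
    have he1 : Real.exp (-(t * G x)) ≤ Real.exp (t * K) * Real.exp (-(t * x ^ 2)) := by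
      rw [← Real.exp_add]
      apply Real.exp_le_exp.2
      have h := hK x
      nlinarith [ht.le]
    have he2 : x ^ (2 * d) * Real.exp (-(t * x ^ 2)) ≤
        ((d.factorial : ℝ) * (2 / t) ^ d) * Real.exp (-(t / 2) * x ^ 2) := by
      have h1 : ((t / 2) * x ^ 2) ^ d ≤ (d.factorial : ℝ) * Real.exp ((t / 2) * x ^ 2) :=
        pow_le_exp_aux (by positivity) d
      have h2 : x ^ (2 * d) = (2 / t) ^ d * ((t / 2) * x ^ 2) ^ d := by
        rw [pow_mul, ← mul_pow]
        congr 1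
        field_simp
      have h3 : Real.exp ((t/2) * x^2) * Real.exp (-(t * x ^ 2)) = Real.exp (-(t / 2) * x ^ 2) := by
        rw [← Real.exp_add]; congr 1; ring
      rw [h2]
      calc (2 / t) ^ d * ((t / 2) * x ^ 2) ^ d * Real.exp (-(t * x ^ 2))
          ≤ (2 / t) ^ d * ((d.factorial : ℝ) * Real.exp ((t / 2) * x ^ 2)) *
              Real.exp (-(t * x ^ 2)) := by
            apply mul_le_mul_of_nonneg_right _ (Real.exp_pos _).le
            exact mul_le_mul_of_nonneg_left h1 (by positivity)
        _ = ((d.factorial : ℝ) * (2 / t) ^ d) *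
              (Real.exp ((t/2) * x^2) * Real.exp (-(t * x ^ 2))) := by ring
        _ = _ := by rw [h3]
    have he3 : Real.exp (-(t * x ^ 2)) ≤ Real.exp (-(t / 2) * x ^ 2) := by
      apply Real.exp_le_exp.2; nlinarith [sq_nonneg x, ht.le]
    have hb : (0:ℝ) ≤ C * (1 + x ^ (2 * d)) := by nlinarith
    calc |r.eval x * Real.exp (-(t * G x))|
        = |r.eval x| * Real.exp (-(t * G x)) := by
          rw [abs_mul, abs_of_nonneg (Real.exp_pos _).le]
      _ ≤ (C * (1 + x ^ (2 * d))) * (Real.exp (t * K) * Real.exp (-(t * x ^ 2))) :=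
          mul_le_mul (hC x) he1 (Real.exp_pos _).le hb
      _ = (C * Real.exp (t * K)) *
            (Real.exp (-(t * x ^ 2)) + x ^ (2 * d) * Real.exp (-(t * x ^ 2))) := by ring
      _ ≤ (C * Real.exp (t * K)) *
            (Real.exp (-(t/2) * x ^ 2) +
              ((d.factorial : ℝ) * (2 / t) ^ d) * Real.exp (-(t / 2) * x ^ 2)) := by
          apply mul_le_mul_of_nonneg_left (add_le_add he3 he2) (by positivity)
      _ = C' * Real.exp (-(t / 2) * x ^ 2) := by rw [hC'def]; ring
  have hint : Integrable (fun x : ℝ => C' * Real.exp (-(t / 2) * x ^ 2)) :=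
    (integrable_exp_neg_mul_sq (by positivity)).const_mul C'
  refine hint.mono' ?_ (Filter.Eventually.of_forall fun x => by
    simpa [Real.norm_eq_abs, abs_mul, abs_of_nonneg (Real.exp_pos _).le] using hmain x)
  exact (r.continuous.mul ((continuous_const.mul hGc).neg.rexp)).aestronglyMeasurable

lemma aux_int_exp (G : ℝ → ℝ) (hGc : Continuous G) (K : ℝ) (hK : ∀ x, x ^ 2 - K ≤ G x)
    {t : ℝ} (ht : 0 < t) :
    Integrable (fun x => Real.exp (-(t * G x))) := by
  have := aux_int G hGc K hK ht 1
  simpa using this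

lemma aux_pos (G : ℝ → ℝ) (hGc : Continuous G) (K : ℝ) (hK : ∀ x, x ^ 2 - K ≤ G x)
    {t : ℝ} (ht : 0 < t) :
    0 < ∫ x : ℝ, Real.exp (-(t * G x)) := by
  rw [integral_pos_iff_support_of_nonneg (fun x => (Real.exp_pos _).le)
    (aux_int_exp G hGc K hK ht)]
  have : (Function.support fun x : ℝ => Real.exp (-(t * G x))) = Set.univ := by
    ext x; simp [Function.mem_support, (Real.exp_pos _).ne']
  rw [this]
  simp

lemma aux_lower (G : ℝ → ℝ) (K : ℝ) (hGc : Continuous G) (hK : ∀ x, x ^ 2 - K ≤ G x)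
    {t : ℝ} (ht : 0 < t) (a η δ : ℝ) (hδ : 0 < δ)
    (hball : ∀ x, |x - a| < δ → G x ≤ η) :
    δ / 2 * Real.exp (-(t * η)) ≤ ∫ x : ℝ, Real.exp (-(t * G x)) := by
  have hint := aux_int_exp G hGc K hK ht
  have hIcc : ∀ x ∈ Set.Icc (a - δ/4) (a + δ/4), |x - a| < δ := by
    intro x hx
    rw [abs_lt]
    constructor <;> [linarith [hx.1]; linarith [hx.2]]
  calc δ / 2 * Real.exp (-(t * η))
      = ∫ _ in Set.Icc (a - δ/4) (a + δ/4), Real.exp (-(t * η)) := by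
        rw [setIntegral_const, measureReal_def, Real.volume_Icc, smul_eq_mul]
        rw [ENNReal.toReal_ofReal (by linarith)]
        congr 1; ring
    _ ≤ ∫ x in Set.Icc (a - δ/4) (a + δ/4), Real.exp (-(t * G x)) := by
        apply setIntegral_mono_on
        · exact (integrableOn_const (by rw [Real.volume_Icc]; exact ENNReal.ofReal_ne_top))
        · exact hint.integrableOn
        · exact measurableSet_Icc
        · intro x hx
          exact Real.exp_le_exp.2 (by nlinarith [hball x (hIcc x hx), ht.le])
    _ ≤ ∫ x : ℝ, Real.exp (-(t * G x)) :=
        setIntegral_le_integral hint (Filter.Eventually.of_forall fun x => (Real.exp_pos _).le)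

lemma aux_log (G : ℝ → ℝ) (K : ℝ) (hGc : Continuous G) (hK : ∀ x, x ^ 2 - K ≤ G x)
    (hG0 : ∀ x, 0 ≤ G x) (a : ℝ) (hGa : G a = 0) :
    Tendsto (fun ε : ℝ => ε / 2 * Real.log (∫ x : ℝ, Real.exp (-(2 / ε * G x))))
      (𝓝[>] (0:ℝ)) (𝓝 0) := by
  have htwo : (0:ℝ) < 2 := two_pos
  set C₀ : ℝ := ∫ x : ℝ, Real.exp (-(2 * G x)) with hC₀
  rw [Metric.tendsto_nhdsWithin_nhds]
  intro η hη
  -- bound pieces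
  obtain ⟨δ, hδ, hballδ⟩ : ∃ δ > 0, ∀ x, |x - a| < δ → G x ≤ η / 4 := by
    have := Metric.continuousAt_iff.1 (hGc.continuousAt (x := a)) (η/4) (by positivity)
    obtain ⟨δ, hδ, h⟩ := this
    exact ⟨δ, hδ, fun x hx => by
      have := h (x := x) (by simpa [Real.dist_eq] using hx)
      rw [Real.dist_eq, hGa, sub_zero] at this
      exact le_of_lt ((abs_lt.1 this).2)⟩
  -- choose threshold
  have h1 : Tendsto (fun ε : ℝ => ε / 2 * Real.log C₀) (𝓝[>] (0:ℝ)) (𝓝 0) := by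
    have : Tendsto (fun ε : ℝ => ε / 2 * Real.log C₀) (𝓝 (0:ℝ)) (𝓝 (0 / 2 * Real.log C₀)) := by
      exact ((continuous_id.div_const 2).mul continuous_const).tendsto 0
    simpa using this.mono_left nhdsWithin_le_nhds
  have h2 : Tendsto (fun ε : ℝ => ε / 2 * Real.log (δ / 2)) (𝓝[>] (0:ℝ)) (𝓝 0) := by
    have : Tendsto (fun ε : ℝ => ε / 2 * Real.log (δ / 2)) (𝓝 (0:ℝ)) (𝓝 (0 / 2 * Real.log (δ / 2))) :=
      ((continuous_id.div_const 2).mul continuous_const).tendsto 0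
    simpa using this.mono_left nhdsWithin_le_nhds
  have h1' := h1.eventually_lt_const (show (0:ℝ) < η/2 by positivity)
  have h2' := h2.eventually_const_lt (show -(η/4) < (0:ℝ) by linarith)
  obtain ⟨d1, hd1, hball1⟩ := Metric.mem_nhdsWithin_iff.1 h1'
  obtain ⟨d2, hd2, hball2⟩ := Metric.mem_nhdsWithin_iff.1 h2'
  refine ⟨min 1 (min d1 d2), by positivity, fun ε hε hdist => ?_⟩
  have hε0 : 0 < ε := hε
  have hεlt : ε < 1 := by
    have := hdist
    rw [Real.dist_eq, sub_zero, abs_of_pos hε0] at this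
    exact lt_of_lt_of_le this (le_trans (min_le_left _ _) le_rfl)
  have hεd1 : dist ε 0 < d1 := lt_of_lt_of_le hdist (le_trans (min_le_right _ _) (min_le_left _ _))
  have hεd2 : dist ε 0 < d2 := lt_of_lt_of_le hdist (le_trans (min_le_right _ _) (min_le_right _ _))
  have ht : (0:ℝ) < 2 / ε := by positivity
  set Z : ℝ := ∫ x : ℝ, Real.exp (-(2 / ε * G x)) with hZ
  have hZpos : 0 < Z := aux_pos G hGc K hK ht
  have hZint := aux_int_exp G hGc K hK ht
  have hint2 := aux_int_exp G hGc K hK htwo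
  -- upper bound
  have hup : Z ≤ C₀ := by
    apply integral_mono hZint hint2
    intro x
    apply Real.exp_le_exp.2
    have h2ε : 2 ≤ 2 / ε := by
      rw [le_div_iff₀ hε0]; nlinarith
    nlinarith [hG0 x]
  have hC₀pos : 0 < C₀ := lt_of_lt_of_le hZpos hup
  have hupper : ε / 2 * Real.log Z ≤ ε / 2 * Real.log C₀ :=
    mul_le_mul_of_nonneg_left (Real.log_le_log hZpos hup) (by positivity)
  -- lower bound
  have hlow : δ / 2 * Real.exp (-(2 / ε * (η / 4))) ≤ Z :=
    aux_lower G K hGc hK ht a (η/4) δ hδ hballδ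
  have hlowpos : (0:ℝ) < δ / 2 * Real.exp (-(2 / ε * (η / 4))) := by positivity
  have hlower : ε / 2 * Real.log (δ / 2) - η / 4 * 1 ≤ ε / 2 * Real.log Z := by
    have hlog : Real.log (δ / 2) + (-(2 / ε * (η / 4))) ≤ Real.log Z := by
      have := Real.log_le_log hlowpos hlow
      rwa [Real.log_mul (by positivity) (Real.exp_ne_zero _), Real.log_exp] at this
    have := mul_le_mul_of_nonneg_left hlog (show (0:ℝ) ≤ ε/2 by positivity)
    have hcalc : ε / 2 * (2 / ε * (η / 4)) = η / 4 * 1 := by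
      field_simp
    nlinarith [this]
  rw [Real.dist_eq, sub_zero, abs_lt]
  constructor
  · have : -(η/4) < ε / 2 * Real.log (δ / 2) :=
      hball2 ⟨Metric.mem_ball.2 hεd2, hε0⟩
    nlinarith [this, hlower, hη]
  · have : ε / 2 * Real.log C₀ < η / 2 :=
      hball1 ⟨Metric.mem_ball.2 hεd1, hε0⟩
    nlinarith [this, hupper]

lemma aux_floor (G : ℝ → ℝ) (hGc : Continuous G) (K : ℝ) (hK : ∀ x, x ^ 2 - K ≤ G x)
    (a : ℝ) (hGpos : ∀ x, x ≠ a → 0 < G x) (δ : ℝ) (hδ : 0 < δ) :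
    ∃ c, 0 < c ∧ c ≤ 1 ∧ ∀ x, δ ≤ |x - a| → c ≤ G x := by
  set ρ : ℝ := Real.sqrt (max K 0 + 1) with hρ
  have hρ0 : 0 ≤ ρ := Real.sqrt_nonneg _
  have hρsq : ρ ^ 2 = max K 0 + 1 := Real.sq_sqrt (by positivity)
  have houter : ∀ x : ℝ, ρ < |x| → 1 ≤ G x := by
    intro x hx
    have hx2 : ρ * ρ < |x| * |x| := mul_self_lt_mul_self hρ0 hx
    nlinarith [hK x, le_max_left K 0, sq_abs x]
  set S : Set ℝ := Set.Icc (-ρ) ρ ∩ {x | δ ≤ |x - a|} with hS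
  have hclosed : IsClosed {x : ℝ | δ ≤ |x - a|} :=
    isClosed_le continuous_const ((continuous_id.sub continuous_const).abs)
  have hScompact : IsCompact S := isCompact_Icc.inter_right hclosed
  by_cases hne : S.Nonempty
  · obtain ⟨x₀, hx₀S, hx₀min⟩ := hScompact.exists_isMinOn hne hGc.continuousOn
    have hx₀ne : x₀ ≠ a := by
      intro h
      have := hx₀S.2
      rw [h] at this
      simp at this
      linarith
    refine ⟨min (G x₀) 1, lt_min (hGpos x₀ hx₀ne) one_pos, min_le_right _ _, fun x hx => ?_⟩
    rcases le_or_gt |x| ρ with h | h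
    · have hxS : x ∈ S := ⟨abs_le.1 h, hx⟩
      exact le_trans (min_le_left _ _) (hx₀min hxS)
    · exact le_trans (min_le_right _ _) (houter x h)
  · refine ⟨1, one_pos, le_rfl, fun x hx => ?_⟩
    rcases le_or_gt |x| ρ with h | h
    · exact absurd ⟨x, ⟨abs_le.1 h, hx⟩⟩ hne
    · exact houter x h

lemma aux_conc (G : ℝ → ℝ) (hGc : Continuous G) (K : ℝ) (hK : ∀ x, x ^ 2 - K ≤ G x)
    (hG0 : ∀ x, 0 ≤ G x) (a : ℝ) (hGa : G a = 0) (hGpos : ∀ x, x ≠ a → 0 < G x)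
    (g : ℝ → ℝ) (hgc : Continuous g) (hg0 : ∀ x, 0 ≤ g x) (hga : g a = 0)
    (r : Polynomial ℝ) (hgr : ∀ x, g x ≤ r.eval x) :
    Tendsto (fun ε : ℝ => (∫ x : ℝ, Real.exp (-(2 / ε * G x)))⁻¹ *
      ∫ x : ℝ, g x * Real.exp (-(2 / ε * G x))) (𝓝[>] (0:ℝ)) (𝓝 0) := by
  rw [Metric.tendsto_nhdsWithin_nhds]
  intro η hη
  -- small g near a
  obtain ⟨δ₁, hδ₁, hball₁⟩ : ∃ δ > 0, ∀ x, |x - a| < δ → g x ≤ η / 4 := by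
    obtain ⟨δ, hδ, h⟩ := Metric.continuousAt_iff.1 (hgc.continuousAt (x := a)) (η/4)
      (by positivity)
    refine ⟨δ, hδ, fun x hx => ?_⟩
    have := h (x := x) (by simpa [Real.dist_eq] using hx)
    rw [Real.dist_eq, hga, sub_zero] at this
    exact le_of_lt ((abs_lt.1 this).2)
  -- floor of G off the ball
  obtain ⟨c, hc, hc1, hfloor⟩ := aux_floor G hGc K hK a hGpos δ₁ hδ₁
  -- small G near a
  obtain ⟨δ₂, hδ₂, hball₂⟩ : ∃ δ > 0, ∀ x, |x - a| < δ → G x ≤ c / 4 := by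
    obtain ⟨δ, hδ, h⟩ := Metric.continuousAt_iff.1 (hGc.continuousAt (x := a)) (c/4)
      (by positivity)
    refine ⟨δ, hδ, fun x hx => ?_⟩
    have := h (x := x) (by simpa [Real.dist_eq] using hx)
    rw [Real.dist_eq, hGa, sub_zero] at this
    exact le_of_lt ((abs_lt.1 this).2)
  -- the fixed reference integral
  set M : ℝ := ∫ x : ℝ, g x * Real.exp (-(1 * G x)) with hM
  have hMint : Integrable (fun x : ℝ => g x * Real.exp (-(1 * G x))) := by
    refine (aux_int G hGc K hK one_pos r).mono'
      ((hgc.mul ((continuous_const.mul hGc).neg.rexp)).aestronglyMeasurable)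
      (Filter.Eventually.of_forall fun x => ?_)
    rw [Real.norm_eq_abs, abs_mul, abs_of_nonneg (hg0 x), abs_of_nonneg (Real.exp_pos _).le]
    exact mul_le_mul_of_nonneg_right (hgr x) (Real.exp_pos _).le
  have hM0 : 0 ≤ M :=
    integral_nonneg fun x => mul_nonneg (hg0 x) (Real.exp_pos _).le
  -- the tail bound tends to 0
  set B : ℝ → ℝ := fun ε => 2 * M * Real.exp c / δ₂ * Real.exp (-(2 / ε * (3 * c / 4)))
    with hBdef
  have hBtendsto : Tendsto B (𝓝[>] (0:ℝ)) (𝓝 0) := by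
    have ht2 : Tendsto (fun ε : ℝ => 2 / ε) (𝓝[>] (0:ℝ)) atTop := by
      simpa [div_eq_mul_inv] using (tendsto_inv_nhdsGT_zero (𝕜 := ℝ)).const_mul_atTop two_pos
    have h3 : Tendsto (fun ε : ℝ => -(2 / ε * (3 * c / 4))) (𝓝[>] (0:ℝ)) atBot :=
      tendsto_neg_atTop_atBot.comp (ht2.atTop_mul_const (by linarith : (0:ℝ) < 3 * c / 4))
    have h4 : Tendsto (fun ε : ℝ => Real.exp (-(2 / ε * (3 * c / 4)))) (𝓝[>] (0:ℝ)) (𝓝 0) :=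
      Real.tendsto_exp_atBot.comp h3
    simpa [hBdef, mul_zero] using h4.const_mul (2 * M * Real.exp c / δ₂)
  have hB' := hBtendsto.eventually_lt_const (show (0:ℝ) < η/4 by positivity)
  obtain ⟨d3, hd3, hballB⟩ := Metric.mem_nhdsWithin_iff.1 hB'
  refine ⟨min 1 d3, by positivity, fun ε hε hdist => ?_⟩
  have hε0 : 0 < ε := hε
  have hεlt : ε < 1 := by
    have := hdist
    rw [Real.dist_eq, sub_zero, abs_of_pos hε0] at this
    exact lt_of_lt_of_le this (min_le_left _ _)
  have hεd3 : dist ε 0 < d3 := lt_of_lt_of_le hdist (min_le_right _ _)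
  have hBε : B ε < η / 4 := hballB ⟨Metric.mem_ball.2 hεd3, hε0⟩
  set t : ℝ := 2 / ε with htdef
  have ht : 0 < t := by positivity
  have ht2 : 2 ≤ t := by
    rw [htdef, le_div_iff₀ hε0]; nlinarith
  set Z : ℝ := ∫ x : ℝ, Real.exp (-(t * G x)) with hZ
  have hZpos : 0 < Z := aux_pos G hGc K hK ht
  have hZint := aux_int_exp G hGc K hK ht
  have hgint : Integrable (fun x : ℝ => g x * Real.exp (-(t * G x))) := by
    refine (aux_int G hGc K hK ht r).mono'
      ((hgc.mul ((continuous_const.mul hGc).neg.rexp)).aestronglyMeasurable)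
      (Filter.Eventually.of_forall fun x => ?_)
    rw [Real.norm_eq_abs, abs_mul, abs_of_nonneg (hg0 x), abs_of_nonneg (Real.exp_pos _).le]
    exact mul_le_mul_of_nonneg_right (hgr x) (Real.exp_pos _).le
  set N : ℝ := ∫ x : ℝ, g x * Real.exp (-(t * G x)) with hN
  have hN0 : 0 ≤ N :=
    integral_nonneg fun x => mul_nonneg (hg0 x) (Real.exp_pos _).le
  -- split
  set s : Set ℝ := Metric.ball a δ₁ with hs
  have hsplit : N = (∫ x in s, g x * Real.exp (-(t * G x)))
      + ∫ x in sᶜ, g x * Real.exp (-(t * G x)) :=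
    (integral_add_compl Metric.isOpen_ball.measurableSet hgint).symm
  have h_in : (∫ x in s, g x * Real.exp (-(t * G x))) ≤ η / 4 * Z := by
    have step1 : (∫ x in s, g x * Real.exp (-(t * G x)))
        ≤ ∫ x in s, η / 4 * Real.exp (-(t * G x)) := by
      apply setIntegral_mono_on hgint.integrableOn
        ((hZint.const_mul (η/4)).integrableOn) Metric.isOpen_ball.measurableSet
      intro x hx
      have : |x - a| < δ₁ := by simpa [Real.dist_eq] using Metric.mem_ball.1 hx
      exact mul_le_mul_of_nonneg_right (hball₁ x this) (Real.exp_pos _).le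
    have step2 : (∫ x in s, η / 4 * Real.exp (-(t * G x))) ≤ η / 4 * Z := by
      rw [MeasureTheory.integral_const_mul]
      exact mul_le_mul_of_nonneg_left
        (setIntegral_le_integral hZint (Filter.Eventually.of_forall fun x => (Real.exp_pos _).le))
        (by positivity)
    linarith
  have h_out : (∫ x in sᶜ, g x * Real.exp (-(t * G x)))
      ≤ Real.exp (-((t - 1) * c)) * M := by
    have step1 : (∫ x in sᶜ, g x * Real.exp (-(t * G x)))
        ≤ ∫ x in sᶜ, Real.exp (-((t - 1) * c)) * (g x * Real.exp (-(1 * G x))) := by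
      apply setIntegral_mono_on hgint.integrableOn
        ((hMint.const_mul _).integrableOn) Metric.isOpen_ball.measurableSet.compl
      intro x hx
      have hxc : c ≤ G x := by
        apply hfloor
        have : ¬ (dist x a < δ₁) := hx
        rw [Real.dist_eq] at this
        linarith [not_lt.1 this]
      have hsplitexp : Real.exp (-(t * G x))
          = Real.exp (-((t - 1) * G x)) * Real.exp (-(1 * G x)) := by
        rw [← Real.exp_add]; congr 1; ring
      have hle : Real.exp (-((t - 1) * G x)) ≤ Real.exp (-((t - 1) * c)) := by
        apply Real.exp_le_exp.2
        have h1 : (0:ℝ) ≤ t - 1 := by linarith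
        nlinarith
      calc g x * Real.exp (-(t * G x))
          = Real.exp (-((t - 1) * G x)) * (g x * Real.exp (-(1 * G x))) := by
            rw [hsplitexp]; ring
        _ ≤ Real.exp (-((t - 1) * c)) * (g x * Real.exp (-(1 * G x))) := by
            apply mul_le_mul_of_nonneg_right hle
              (mul_nonneg (hg0 x) (Real.exp_pos _).le)
    have step2 : (∫ x in sᶜ, Real.exp (-((t - 1) * c)) * (g x * Real.exp (-(1 * G x))))
        ≤ Real.exp (-((t - 1) * c)) * M := by
      rw [MeasureTheory.integral_const_mul]
      exact mul_le_mul_of_nonneg_left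
        (setIntegral_le_integral hMint (Filter.Eventually.of_forall fun x =>
          mul_nonneg (hg0 x) (Real.exp_pos _).le))
        (Real.exp_pos _).le
    linarith
  -- lower bound on Z
  have hlow : δ₂ / 2 * Real.exp (-(t * (c/4))) ≤ Z :=
    aux_lower G K hGc hK ht a (c/4) δ₂ hδ₂ hball₂
  have hlowpos : (0:ℝ) < δ₂ / 2 * Real.exp (-(t * (c/4))) := by positivity
  -- combine
  have hRle : Z⁻¹ * N ≤ η / 4 + B ε := by
    have h1 : Z⁻¹ * N ≤ Z⁻¹ * (η / 4 * Z + Real.exp (-((t - 1) * c)) * M) := by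
      apply mul_le_mul_of_nonneg_left _ (inv_nonneg.2 hZpos.le)
      rw [hsplit]; linarith
    have h2 : Z⁻¹ * (η / 4 * Z + Real.exp (-((t - 1) * c)) * M)
        = η / 4 + Z⁻¹ * (Real.exp (-((t - 1) * c)) * M) := by
      rw [mul_add]
      congr 1
      rw [mul_comm (η / 4) Z, ← mul_assoc, inv_mul_cancel₀ hZpos.ne', one_mul]
    have h3 : Z⁻¹ * (Real.exp (-((t - 1) * c)) * M)
        ≤ (δ₂ / 2 * Real.exp (-(t * (c/4))))⁻¹ * (Real.exp (-((t - 1) * c)) * M) := by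
      apply mul_le_mul_of_nonneg_right (inv_anti₀ hlowpos hlow)
        (mul_nonneg (Real.exp_pos _).le hM0)
    have h4 : (δ₂ / 2 * Real.exp (-(t * (c/4))))⁻¹ * (Real.exp (-((t - 1) * c)) * M)
        = B ε := by
      have hi : (δ₂ / 2 * Real.exp (-(t * (c/4))))⁻¹
          = 2 / δ₂ * Real.exp (t * (c/4)) := by
        rw [mul_inv, Real.exp_neg, inv_inv, inv_div]
      have e1 : Real.exp (t * (c/4)) * Real.exp (-((t - 1) * c))
          = Real.exp c * Real.exp (-(t * (3 * c / 4))) := by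
        rw [← Real.exp_add, ← Real.exp_add]; congr 1; ring
      rw [hi, hBdef]
      calc 2 / δ₂ * Real.exp (t * (c/4)) * (Real.exp (-((t - 1) * c)) * M)
          = 2 * M / δ₂ * (Real.exp (t * (c/4)) * Real.exp (-((t - 1) * c))) := by ring
        _ = 2 * M / δ₂ * (Real.exp c * Real.exp (-(t * (3 * c / 4)))) := by rw [e1]
        _ = 2 * M * Real.exp c / δ₂ * Real.exp (-(2 / ε * (3 * c / 4))) := by
            rw [htdef]; ring
    linarith [h1, h3, h4.le, h4.ge, h2]
  have hR0 : 0 ≤ Z⁻¹ * N := mul_nonneg (inv_nonneg.2 hZpos.le) hN0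
  rw [Real.dist_eq, sub_zero, abs_of_nonneg hR0]
  calc Z⁻¹ * N ≤ η / 4 + B ε := hRle
    _ < η / 4 + η / 4 := by linarith
    _ < η := by linarith

/-- The free energy identity and bounds for the Gibbs density, for a fixed `ε > 0`. -/
lemma main_bounds (V F G : ℝ → ℝ) (a K : ℝ)
    (hGdef : ∀ x, G x = V x + F (x - a) - V a)
    (hFnonneg : ∀ x, 0 ≤ F x)
    (hFxy : ∀ x y : ℝ, F (x - y) ≤ F (2*(x-a))/2 + F (2*(y-a))/2)
    (ε : ℝ) (hε : 0 < ε)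
    (hV_int : Integrable (fun x => V x * Real.exp (-(2/ε * G x))))
    (hFa_int : Integrable (fun x => F (x - a) * Real.exp (-(2/ε * G x))))
    (hF2_int : Integrable (fun x => F (2*(x - a)) * Real.exp (-(2/ε * G x))))
    (hG_int : Integrable (fun x => G x * Real.exp (-(2/ε * G x))))
    (hE_int : Integrable (fun x => Real.exp (-(2/ε * G x))))
    (hZpos : 0 < ∫ x : ℝ, Real.exp (-(2/ε * G x))) :
    V a - ε/2 * Real.log (∫ x : ℝ, Real.exp (-(2/ε * G x)))
      - (∫ x : ℝ, Real.exp (-(2/ε * G x)))⁻¹ *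
          (∫ x : ℝ, F (x-a) * Real.exp (-(2/ε * G x)))
    ≤ freeEnergy V F ε (fun x => (∫ y : ℝ, Real.exp (-(2 / ε) * (V y + F (y - a))))⁻¹ *
          Real.exp (-(2 / ε) * (V x + F (x - a)))) ∧
    freeEnergy V F ε (fun x => (∫ y : ℝ, Real.exp (-(2 / ε) * (V y + F (y - a))))⁻¹ *
          Real.exp (-(2 / ε) * (V x + F (x - a))))
    ≤ V a - ε/2 * Real.log (∫ x : ℝ, Real.exp (-(2/ε * G x)))
      - (∫ x : ℝ, Real.exp (-(2/ε * G x)))⁻¹ *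
          (∫ x : ℝ, F (x-a) * Real.exp (-(2/ε * G x)))
      + 1/2 * ((∫ x : ℝ, Real.exp (-(2/ε * G x)))⁻¹ *
          (∫ x : ℝ, F (2*(x-a)) * Real.exp (-(2/ε * G x)))) := by
  set t : ℝ := 2 / ε with htdef
  have ht : 0 < t := by positivity
  set E : ℝ → ℝ := fun x => Real.exp (-(t * G x)) with hEdef
  set Z : ℝ := ∫ x : ℝ, E x with hZdef
  have hZne : Z ≠ 0 := hZpos.ne'
  have hZZ : Z⁻¹ * Z = 1 := inv_mul_cancel₀ hZne
  set u' : ℝ → ℝ := fun x => Z⁻¹ * E x with hu'def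
  have hu'0 : ∀ x, 0 ≤ u' x := fun x =>
    mul_nonneg (inv_nonneg.2 hZpos.le) (Real.exp_pos _).le
  have hu'int : Integrable u' := hE_int.const_mul _
  have hu'total : (∫ x : ℝ, u' x) = 1 := by
    rw [hu'def]
    rw [MeasureTheory.integral_const_mul]
    exact hZZ
  -- the statement density equals u'
  have hu : (fun x => (∫ y : ℝ, Real.exp (-(2 / ε) * (V y + F (y - a))))⁻¹ *
      Real.exp (-(2 / ε) * (V x + F (x - a)))) = u' := by
    have hWG : ∀ x : ℝ, -(2 / ε) * (V x + F (x - a)) = -(t * V a) + -(t * G x) := by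
      intro x
      rw [hGdef x]
      ring
    have hZW : (∫ y : ℝ, Real.exp (-(2 / ε) * (V y + F (y - a))))
        = Real.exp (-(t * V a)) * Z := by
      simp only [hWG, Real.exp_add]
      rw [MeasureTheory.integral_const_mul]
    funext x
    rw [hZW, hWG x, Real.exp_add, mul_inv, hu'def]
    calc (Real.exp (-(t * V a)))⁻¹ * Z⁻¹ * (Real.exp (-(t * V a)) * Real.exp (-(t * G x)))
        = ((Real.exp (-(t * V a)))⁻¹ * Real.exp (-(t * V a))) * (Z⁻¹ * Real.exp (-(t * G x))) := by
          ring
      _ = Z⁻¹ * Real.exp (-(t * G x)) := by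
          rw [inv_mul_cancel₀ (Real.exp_ne_zero _), one_mul]
  rw [hu]
  -- entropy integral
  set IG : ℝ := ∫ x : ℝ, G x * E x with hIGdef
  set IV : ℝ := ∫ x : ℝ, V x * E x with hIVdef
  set IFa : ℝ := ∫ x : ℝ, F (x - a) * E x with hIFadef
  set IF2 : ℝ := ∫ x : ℝ, F (2*(x - a)) * E x with hIF2def
  have hEnt : (∫ x : ℝ, u' x * Real.log (u' x))
      = (-Real.log Z) * (Z⁻¹ * Z) + (-t * Z⁻¹) * IG := by
    have hpt : ∀ x : ℝ, u' x * Real.log (u' x)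
        = (-Real.log Z) * (Z⁻¹ * E x) + (-t * Z⁻¹) * (G x * E x) := by
      intro x
      have hlog : Real.log (u' x) = -Real.log Z + -(t * G x) := by
        rw [hu'def]
        rw [Real.log_mul (inv_ne_zero hZne) (Real.exp_ne_zero _), Real.log_inv, Real.log_exp]
      rw [hlog, hu'def]
      ring
    rw [show (fun x => u' x * Real.log (u' x))
        = fun x => (-Real.log Z) * (Z⁻¹ * E x) + (-t * Z⁻¹) * (G x * E x) from funext hpt]
    rw [MeasureTheory.integral_add (((hE_int.const_mul _).const_mul _)) (hG_int.const_mul _)]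
    rw [MeasureTheory.integral_const_mul, MeasureTheory.integral_const_mul,
      MeasureTheory.integral_const_mul]
  -- potential integral
  have hIVeq : (∫ x : ℝ, V x * u' x) = Z⁻¹ * IV := by
    rw [show (fun x => V x * u' x) = fun x => Z⁻¹ * (V x * E x) from
      funext fun x => by rw [hu'def]; ring]
    rw [MeasureTheory.integral_const_mul]
  -- relation between IG and the rest
  have hV_int' : Integrable (fun x => V x * E x) := hV_int
  have hFa_int' : Integrable (fun x => F (x - a) * E x) := hFa_int
  have hIGeq : IG = IV + IFa + (-(V a)) * Z := by
    rw [hIGdef, show (fun x => G x * E x)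
        = fun x => V x * E x + F (x - a) * E x + (-(V a)) * E x from
      funext fun x => by rw [hGdef x]; ring]
    have hsum : Integrable (fun x => V x * E x + F (x - a) * E x) := hV_int'.add hFa_int'
    rw [MeasureTheory.integral_add hsum (hE_int.const_mul _),
      MeasureTheory.integral_add hV_int' hFa_int', MeasureTheory.integral_const_mul, ← hZdef]
  -- interaction double integral bounds
  set D : ℝ := ∫ x : ℝ, ∫ y : ℝ, F (x - y) * u' x * u' y with hDdef
  have hD0 : 0 ≤ D :=
    integral_nonneg fun x => integral_nonneg fun y =>
      mul_nonneg (mul_nonneg (hFnonneg _) (hu'0 x)) (hu'0 y)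
  have hJint : Integrable (fun y : ℝ => F (2*(y - a)) * u' y) := by
    refine (hF2_int.const_mul Z⁻¹).congr (Filter.Eventually.of_forall fun y => ?_)
    rw [hu'def]; ring
  have hJeq : (∫ y : ℝ, F (2*(y - a)) * u' y) = Z⁻¹ * IF2 := by
    rw [show (fun y => F (2*(y - a)) * u' y) = fun y => Z⁻¹ * (F (2*(y - a)) * E y) from
      funext fun y => by rw [hu'def]; ring]
    rw [MeasureTheory.integral_const_mul]
  have hDle : D ≤ Z⁻¹ * IF2 := by
    have hinner : ∀ x : ℝ, (∫ y : ℝ, F (x - y) * u' x * u' y)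
        ≤ u' x * (F (2*(x - a))/2) + u' x * ((Z⁻¹ * IF2)/2) := by
      intro x
      have hbint : Integrable (fun y : ℝ =>
          (u' x * (F (2*(x - a))/2)) * u' y + (u' x / 2) * (F (2*(y - a)) * u' y)) :=
        (hu'int.const_mul _).add (hJint.const_mul _)
      have hle : ∀ y : ℝ, F (x - y) * u' x * u' y
          ≤ (u' x * (F (2*(x - a))/2)) * u' y + (u' x / 2) * (F (2*(y - a)) * u' y) := by
        intro y
        have h1 := mul_le_mul_of_nonneg_right (hFxy x y) (mul_nonneg (hu'0 x) (hu'0 y))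
        calc F (x - y) * u' x * u' y = F (x - y) * (u' x * u' y) := by ring
          _ ≤ (F (2*(x-a))/2 + F (2*(y-a))/2) * (u' x * u' y) := h1
          _ = (u' x * (F (2*(x - a))/2)) * u' y + (u' x / 2) * (F (2*(y - a)) * u' y) := by
              ring
      have := integral_mono_of_nonneg
        (Filter.Eventually.of_forall fun y =>
          mul_nonneg (mul_nonneg (hFnonneg _) (hu'0 x)) (hu'0 y))
        hbint (Filter.Eventually.of_forall hle)
      calc (∫ y : ℝ, F (x - y) * u' x * u' y)
          ≤ ∫ y : ℝ, (u' x * (F (2*(x - a))/2)) * u' y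
              + (u' x / 2) * (F (2*(y - a)) * u' y) := this
        _ = (u' x * (F (2*(x - a))/2)) * (Z⁻¹ * Z) + (u' x / 2) * (Z⁻¹ * IF2) := by
            rw [MeasureTheory.integral_add (hu'int.const_mul _) (hJint.const_mul _),
              MeasureTheory.integral_const_mul, MeasureTheory.integral_const_mul,
              MeasureTheory.integral_const_mul, hJeq, ← hZdef]
        _ = u' x * (F (2*(x - a))/2) + u' x * ((Z⁻¹ * IF2)/2) := by
            rw [hZZ]; ring
    have houtint : Integrable (fun x : ℝ =>
        u' x * (F (2*(x - a))/2) + u' x * ((Z⁻¹ * IF2)/2)) := by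
      refine Integrable.add ?_ ?_
      · refine (hJint.const_mul (1/2 : ℝ)).congr (Filter.Eventually.of_forall fun x => ?_)
        ring
      · exact (hu'int.mul_const _)
    have houter := integral_mono_of_nonneg
      (Filter.Eventually.of_forall fun x => integral_nonneg fun y =>
        mul_nonneg (mul_nonneg (hFnonneg _) (hu'0 x)) (hu'0 y))
      houtint (Filter.Eventually.of_forall hinner)
    calc D ≤ ∫ x : ℝ, u' x * (F (2*(x - a))/2) + u' x * ((Z⁻¹ * IF2)/2) := houter
      _ = (∫ x : ℝ, u' x * (F (2*(x - a))/2)) + (∫ x : ℝ, u' x * ((Z⁻¹ * IF2)/2)) := by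
          rw [MeasureTheory.integral_add]
          · refine (hJint.const_mul (1/2 : ℝ)).congr (Filter.Eventually.of_forall fun x => ?_)
            ring
          · exact (hu'int.mul_const _)
      _ = (1/2) * (∫ x : ℝ, F (2*(x - a)) * u' x) + (∫ x : ℝ, u' x) * ((Z⁻¹ * IF2)/2) := by
          rw [show (fun x : ℝ => u' x * (F (2*(x - a))/2))
              = fun x => (1/2 : ℝ) * (F (2*(x - a)) * u' x) from funext fun x => by ring,
            MeasureTheory.integral_const_mul, MeasureTheory.integral_mul_const]
      _ = Z⁻¹ * IF2 := by
          rw [hJeq, hu'total]; ring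
  -- assemble
  have hFE : freeEnergy V F ε u' = V a - ε/2 * Real.log Z - Z⁻¹ * IFa + 1/2 * D := by
    unfold freeEnergy
    rw [hEnt, hIVeq, ← hDdef, hIGeq]
    have hεt : ε / 2 * t = 1 := by
      rw [htdef]; field_simp
    linear_combination (V a * (Z⁻¹ * Z) - Z⁻¹ * IV - Z⁻¹ * IFa) * hεt
      + (V a - ε / 2 * Real.log Z) * hZZ
  constructor
  · rw [hFE]; linarith
  · rw [hFE]; linarith

theorem stmt17
    (m n : ℕ) (hm : 2 ≤ m) (hn : 1 ≤ n)
    (V F : ℝ → ℝ) (p q : Polynomial ℝ)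
    (hVp : ∀ x, V x = p.eval x) (hVdeg : p.natDegree = 2 * m)
    (hVeven : ∀ x, V (-x) = V x) (hV0 : V 0 = 0)
    (a : ℝ) (ha : 0 < a)
    (hVcrit : ∀ x, deriv V x = 0 ↔ x = -a ∨ x = 0 ∨ x = a)
    (hVa : 0 < deriv (deriv V) a) (hV0'' : deriv (deriv V) 0 < 0)
    (C₂ C₄ : ℝ) (hC₂ : 0 < C₂) (hC₄ : 0 < C₄)
    (hVgrowth : ∀ x, C₄ * x ^ 4 - C₂ * x ^ 2 ≤ V x)
    (hVinfTop : Tendsto (deriv (deriv V)) atTop atTop)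
    (hVinfBot : Tendsto (deriv (deriv V)) atBot atTop)
    (hVpos : ∀ x, a ≤ x → 0 < deriv (deriv V) x)
    (hVconv : ConvexOn ℝ Set.univ (deriv (deriv V)))
    (hFq : ∀ x, F x = q.eval x) (hFdeg : q.natDegree = 2 * n)
    (hFeven : ∀ x, F (-x) = F x) (hF0 : F 0 = 0)
    (hFconv : ConvexOn ℝ Set.univ F)
    (hF''conv : ConvexOn ℝ Set.univ (deriv (deriv F)))
    :
    Tendsto (fun ε : ℝ => freeEnergy V F ε
        (fun x => (∫ y : ℝ, Real.exp (-(2 / ε) * (V y + F (y - a))))⁻¹ *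
          Real.exp (-(2 / ε) * (V x + F (x - a)))))
      (𝓝[>] (0 : ℝ)) (𝓝 (V a)) := by
  -- basic analytic facts about V and F
  have hVfun : V = fun x => p.eval x := funext hVp
  have hFfun : F = fun x => q.eval x := funext hFq
  have hVcont : Continuous V := by rw [hVfun]; exact p.continuous
  have hFcont : Continuous F := by rw [hFfun]; exact q.continuous
  have hVdiff : Differentiable ℝ V := by rw [hVfun]; exact p.differentiable
  have hVderiv : deriv V = fun x => p.derivative.eval x := by
    funext x; rw [hVfun]; exact Polynomial.deriv (p := p)
  have hVderiv2 : deriv (deriv V) = fun x => p.derivative.derivative.eval x := by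
    funext x; rw [hVderiv]; exact Polynomial.deriv (p := p.derivative)
  have hV'cont : Continuous (deriv V) := by rw [hVderiv]; exact p.derivative.continuous
  have hV'a : deriv V a = 0 := (hVcrit a).2 (Or.inr (Or.inr rfl))
  have hV'0 : deriv V 0 = 0 := (hVcrit 0).2 (Or.inr (Or.inl rfl))
  -- V is minimized at a on [a, ∞)
  have hVminRight : ∀ x, a ≤ x → V a ≤ V x := by
    have hmono' : StrictMonoOn (deriv V) (Set.Ici a) := by
      apply strictMonoOn_of_deriv_pos (convex_Ici a) hV'cont.continuousOn
      intro x hx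
      rw [interior_Ici] at hx
      exact hVpos x (le_of_lt hx)
    have hmonoV : MonotoneOn V (Set.Ici a) := by
      apply monotoneOn_of_deriv_nonneg (convex_Ici a) hVcont.continuousOn
        hVdiff.differentiableOn
      intro x hx
      rw [interior_Ici] at hx
      have := hmono' Set.self_mem_Ici (Set.mem_Ici.2 (le_of_lt hx) : x ∈ Set.Ici a) hx
      rw [hV'a] at this
      exact this.le
    exact fun x hx => hmonoV Set.self_mem_Ici hx hx
  -- deriv V is negative on (0, a)
  have hV'negmid : ∀ x ∈ Set.Ioo 0 a, deriv V x < 0 := by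
    have hV2at0 : HasDerivAt (deriv V) (deriv (deriv V) 0) 0 := by
      rw [hVderiv2, hVderiv]
      exact p.derivative.hasDerivAt 0
    have hslope := hasDerivAt_iff_tendsto_slope.1 hV2at0
    have hev : ∀ᶠ x in 𝓝[≠] (0:ℝ), slope (deriv V) 0 x < 0 :=
      hslope.eventually_lt_const hV0''
    have hsub : (𝓝[>] (0:ℝ)) ≤ 𝓝[≠] (0:ℝ) :=
      nhdsWithin_mono 0 fun x hx => ne_of_gt hx
    obtain ⟨x₀, hx₀slope, hx₀Ioo⟩ :=
      ((hev.filter_mono hsub).and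
        (eventually_of_mem (Ioo_mem_nhdsGT ha) fun x hx => hx)).exists
    have hx₀neg : deriv V x₀ < 0 := by
      rw [slope_def_field, hV'0, sub_zero, sub_zero] at hx₀slope
      rcases div_neg_iff.1 hx₀slope with ⟨h1, h2⟩ | ⟨h1, h2⟩
      · linarith [hx₀Ioo.1]
      · exact h1
    intro x hx
    by_contra hcon
    push_neg at hcon
    rcases eq_or_lt_of_le hcon with heq | hlt
    · rcases (hVcrit x).1 heq.symm with h | h | h <;> rcases hx with ⟨h1, h2⟩ <;> linarith
    · have hcont : ContinuousOn (deriv V) (Set.uIcc x₀ x) := hV'cont.continuousOn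
      have h0mem : (0:ℝ) ∈ Set.uIcc (deriv V x₀) (deriv V x) :=
        Set.mem_uIcc.2 (Or.inl ⟨hx₀neg.le, hlt.le⟩)
      obtain ⟨z, hz, hz0⟩ := intermediate_value_uIcc hcont h0mem
      have hzb := Set.mem_uIcc.1 hz
      rcases (hVcrit z).1 hz0 with h | h | h <;>
        rcases hzb with ⟨h1, h2⟩ | ⟨h1, h2⟩ <;>
        rcases hx with ⟨h3, h4⟩ <;> rcases hx₀Ioo with ⟨h5, h6⟩ <;> linarith
  -- V is minimized at a on [0, a]
  have hVminMid : ∀ x, 0 ≤ x → x ≤ a → V a ≤ V x := by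
    have hanti : AntitoneOn V (Set.Icc 0 a) := by
      apply antitoneOn_of_deriv_nonpos (convex_Icc 0 a) hVcont.continuousOn
        hVdiff.differentiableOn
      intro x hx
      rw [interior_Icc] at hx
      exact (hV'negmid x hx).le
    exact fun x h0 hxa => hanti ⟨h0, hxa⟩ ⟨le_of_lt ha, le_rfl⟩ hxa
  have hVmin : ∀ x, V a ≤ V x := by
    have hnn : ∀ x, 0 ≤ x → V a ≤ V x := fun x h0 => by
      rcases le_total x a with h | h
      · exact hVminMid x h0 h
      · exact hVminRight x h
    intro x
    rcases le_total 0 x with h | h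
    · exact hnn x h
    · calc V a ≤ V (-x) := hnn (-x) (by linarith)
        _ = V x := hVeven x
  -- F is nonnegative and positive away from 0
  have hFnonneg : ∀ x, 0 ≤ F x := by
    intro x
    have h := hFconv.2 (Set.mem_univ x) (Set.mem_univ (-x))
      (by norm_num : (0:ℝ) ≤ 1/2) (by norm_num : (0:ℝ) ≤ 1/2) (by norm_num)
    have hpt : (1/2 : ℝ) • x + (1/2 : ℝ) • (-x) = 0 := by
      simp [smul_eq_mul]
    rw [hpt, hF0] at h
    rw [hFeven x] at h
    simp only [smul_eq_mul] at h
    linarith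
  have hFposOfPos : ∀ x, 0 < x → 0 < F x := by
    intro x hx
    rcases (hFnonneg x).eq_or_lt with heq | h
    · exfalso
      have hzero : ∀ s ∈ Set.Icc (0:ℝ) x, F s = 0 := by
        intro s hs
        have hθ0 : (0:ℝ) ≤ 1 - s / x := by
          rw [sub_nonneg, div_le_one hx]; exact hs.2
        have hθ1 : (0:ℝ) ≤ s / x := div_nonneg hs.1 hx.le
        have h := hFconv.2 (Set.mem_univ (0:ℝ)) (Set.mem_univ x) hθ0 hθ1 (by ring)
        have hpt : (1 - s / x : ℝ) • (0:ℝ) + (s / x : ℝ) • x = s := by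
          simp [smul_eq_mul]
          field_simp
        rw [hpt, hF0] at h
        simp only [smul_eq_mul, mul_zero, zero_add] at h
        have : F s ≤ s / x * F x := by linarith
        rw [← heq] at this
        simp at this
        exact le_antisymm (by linarith) (hFnonneg s)
      have hq0 : q = 0 := by
        apply Polynomial.eq_zero_of_infinite_isRoot
        apply Set.Infinite.mono _ (Set.Icc_infinite hx)
        intro s hs
        simp only [Set.mem_setOf_eq, Polynomial.IsRoot]
        rw [← hFq s]
        exact hzero s hs
      rw [hq0, Polynomial.natDegree_zero] at hFdeg
      omega
    · exact h
  have hFpos : ∀ x : ℝ, x ≠ 0 → 0 < F x := by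
    intro x hx
    rcases lt_or_gt_of_ne hx with h | h
    · rw [← hFeven x]
      exact hFposOfPos (-x) (by linarith)
    · exact hFposOfPos x h
  -- the convexity bound for F (x - y)
  have hFxy : ∀ x y : ℝ, F (x - y) ≤ F (2*(x-a))/2 + F (2*(y-a))/2 := by
    intro x y
    have h := hFconv.2 (Set.mem_univ (2*(x-a))) (Set.mem_univ (2*(a-y)))
      (by norm_num : (0:ℝ) ≤ 1/2) (by norm_num : (0:ℝ) ≤ 1/2) (by norm_num)
    have hpt : (1/2 : ℝ) • (2*(x-a)) + (1/2 : ℝ) • (2*(a-y)) = x - y := by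
      simp [smul_eq_mul]
    rw [hpt] at h
    have heq : F (2*(a-y)) = F (2*(y-a)) := by
      rw [show (2*(a-y) : ℝ) = -(2*(y-a)) from by ring, hFeven]
    rw [heq] at h
    simp only [smul_eq_mul] at h
    linarith
  -- the effective potential G
  set G : ℝ → ℝ := fun x => V x + F (x - a) - V a with hGdef'
  have hGdef : ∀ x, G x = V x + F (x - a) - V a := fun x => rfl
  have hGc : Continuous G :=
    (hVcont.add (hFcont.comp (continuous_id.sub continuous_const))).sub continuous_const
  have hG0 : ∀ x, 0 ≤ G x := by
    intro x
    have h1 := hVmin x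
    have h2 := hFnonneg (x - a)
    simp only [hGdef]
    linarith
  have hGa : G a = 0 := by
    simp only [hGdef, sub_self, hF0]
    ring
  have hGpos : ∀ x, x ≠ a → 0 < G x := by
    intro x hx
    have h1 := hFpos (x - a) (sub_ne_zero.2 hx)
    have h2 := hVmin x
    simp only [hGdef]
    linarith
  set K : ℝ := (1 + C₂)^2 / (4 * C₄) + V a with hKdef
  have hGK : ∀ x, x ^ 2 - K ≤ G x := by
    intro x
    have h1 := hVgrowth x
    have h2 := hFnonneg (x - a)
    have h4 : (0:ℝ) < 4 * C₄ := by linarith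
    have h5 : (1 + C₂)^2 / (4 * C₄) * (4 * C₄) = (1 + C₂)^2 := div_mul_cancel₀ _ h4.ne'
    simp only [hGdef, hKdef]
    nlinarith [sq_nonneg (2*C₄*x^2 - (1 + C₂)), sq_nonneg x]
  -- polynomials representing the integrands
  set gp : Polynomial ℝ := p + q.comp (Polynomial.X - Polynomial.C a)
    - Polynomial.C (V a) with hgpdef
  have hgp : ∀ x, G x = gp.eval x := by
    intro x
    simp only [hGdef, hgpdef, Polynomial.eval_sub, Polynomial.eval_add, Polynomial.eval_comp,
      Polynomial.eval_X, Polynomial.eval_C, hVp x, hFq (x - a)]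
  set qa : Polynomial ℝ := q.comp (Polynomial.X - Polynomial.C a) with hqadef
  have hqa : ∀ x, F (x - a) = qa.eval x := by
    intro x
    simp only [hqadef, Polynomial.eval_comp, Polynomial.eval_sub, Polynomial.eval_X,
      Polynomial.eval_C, hFq (x - a)]
  set q2 : Polynomial ℝ := q.comp (Polynomial.C 2 * (Polynomial.X - Polynomial.C a)) with hq2def
  have hq2 : ∀ x, F (2*(x - a)) = q2.eval x := by
    intro x
    simp only [hq2def, Polynomial.eval_comp, Polynomial.eval_mul, Polynomial.eval_sub,
      Polynomial.eval_X, Polynomial.eval_C, hFq (2*(x - a))]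
  -- limits of the three scalar quantities
  have hlog := aux_log G K hGc hGK hG0 a hGa
  have hconc1 : Tendsto (fun ε : ℝ => (∫ x : ℝ, Real.exp (-(2 / ε * G x)))⁻¹ *
      ∫ x : ℝ, F (x - a) * Real.exp (-(2 / ε * G x))) (𝓝[>] (0:ℝ)) (𝓝 0) := by
    apply aux_conc G hGc K hGK hG0 a hGa hGpos (fun x => F (x - a))
      (hFcont.comp (continuous_id.sub continuous_const)) (fun x => hFnonneg _)
      (by simp [hF0]) qa (fun x => (hqa x).le)
  have hconc2 : Tendsto (fun ε : ℝ => (∫ x : ℝ, Real.exp (-(2 / ε * G x)))⁻¹ *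
      ∫ x : ℝ, F (2*(x - a)) * Real.exp (-(2 / ε * G x))) (𝓝[>] (0:ℝ)) (𝓝 0) := by
    apply aux_conc G hGc K hGK hG0 a hGa hGpos (fun x => F (2*(x - a)))
      (hFcont.comp (continuous_const.mul (continuous_id.sub continuous_const)))
      (fun x => hFnonneg _) (by simp [hF0]) q2 (fun x => (hq2 x).le)
  -- lower and upper bounding functions
  set L : ℝ → ℝ := fun ε => V a - ε/2 * Real.log (∫ x : ℝ, Real.exp (-(2/ε * G x)))
      - (∫ x : ℝ, Real.exp (-(2/ε * G x)))⁻¹ *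
          (∫ x : ℝ, F (x-a) * Real.exp (-(2/ε * G x))) with hLdef
  set U : ℝ → ℝ := fun ε => L ε + 1/2 * ((∫ x : ℝ, Real.exp (-(2/ε * G x)))⁻¹ *
          (∫ x : ℝ, F (2*(x-a)) * Real.exp (-(2/ε * G x)))) with hUdef
  have hLlim : Tendsto L (𝓝[>] (0:ℝ)) (𝓝 (V a)) := by
    have := (tendsto_const_nhds (x := V a) (f := 𝓝[>] (0:ℝ))).sub hlog |>.sub hconc1
    simpa using this
  have hUlim : Tendsto U (𝓝[>] (0:ℝ)) (𝓝 (V a)) := by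
    have h := hLlim.add (hconc2.const_mul (1/2 : ℝ))
    rw [hUdef]
    simpa using h
  -- squeeze
  apply tendsto_of_tendsto_of_tendsto_of_le_of_le' hLlim hUlim
  · filter_upwards [self_mem_nhdsWithin] with ε hε
    have hε0 : (0:ℝ) < ε := hε
    have ht : (0:ℝ) < 2/ε := by positivity
    have hV_int : Integrable (fun x => V x * Real.exp (-(2/ε * G x))) := by
      refine (aux_int G hGc K hGK ht p).congr (Filter.Eventually.of_forall fun x => ?_)
      simp only [hVp]
    have hFa_int : Integrable (fun x => F (x - a) * Real.exp (-(2/ε * G x))) := by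
      refine (aux_int G hGc K hGK ht qa).congr (Filter.Eventually.of_forall fun x => ?_)
      simp only [hqa]
    have hF2_int : Integrable (fun x => F (2*(x - a)) * Real.exp (-(2/ε * G x))) := by
      refine (aux_int G hGc K hGK ht q2).congr (Filter.Eventually.of_forall fun x => ?_)
      simp only [hq2]
    have hG_int : Integrable (fun x => G x * Real.exp (-(2/ε * G x))) := by
      refine (aux_int G hGc K hGK ht gp).congr (Filter.Eventually.of_forall fun x => ?_)
      simp only [hgp]
    have hE_int := aux_int_exp G hGc K hGK ht
    have hZpos := aux_pos G hGc K hGK ht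
    exact (main_bounds V F G a K hGdef hFnonneg hFxy ε hε0 hV_int hFa_int hF2_int hG_int
      hE_int hZpos).1
  · filter_upwards [self_mem_nhdsWithin] with ε hε
    have hε0 : (0:ℝ) < ε := hε
    have ht : (0:ℝ) < 2/ε := by positivity
    have hV_int : Integrable (fun x => V x * Real.exp (-(2/ε * G x))) := by
      refine (aux_int G hGc K hGK ht p).congr (Filter.Eventually.of_forall fun x => ?_)
      simp only [hVp]
    have hFa_int : Integrable (fun x => F (x - a) * Real.exp (-(2/ε * G x))) := by
      refine (aux_int G hGc K hGK ht qa).congr (Filter.Eventually.of_forall fun x => ?_)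
      simp only [hqa]
    have hF2_int : Integrable (fun x => F (2*(x - a)) * Real.exp (-(2/ε * G x))) := by
      refine (aux_int G hGc K hGK ht q2).congr (Filter.Eventually.of_forall fun x => ?_)
      simp only [hq2]
    have hG_int : Integrable (fun x => G x * Real.exp (-(2/ε * G x))) := by
      refine (aux_int G hGc K hGK ht gp).congr (Filter.Eventually.of_forall fun x => ?_)
      simp only [hgp]
    have hE_int := aux_int_exp G hGc K hGK ht
    have hZpos := aux_pos G hGc K hGK ht
    exact (main_bounds V F G a K hGdef hFnonneg hFxy ε hε0 hV_int hFa_int hF2_int hG_int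
      hE_int hZpos).2
end
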